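/- arXiv:1906.02026 — 7 statements merged into one kernel-verified Lean document; each statement's English description precedes it below -/
import Mathlib

section
/- Let f : ℝ → ℝ be twice continuously differentiable, fix an interval [a₀, b₀] with a₀ < b₀, and let c₀ ∈ (a₀, b₀) be a mean value abscissa for f on [a₀, b₀]. Suppose f''(c₀) ≠ 0. Then there exist δ > 0, ε > 0, and a continuously differentiable function C : (b₀ - δ, b₀ + δ) → ℝ with C(b₀) = c₀ such that (f(b) - f(a₀))/(b - a₀) = f'(C(b)) for all b with |b - b₀| < δ; moreover, if |b - b₀| < δ, |c - c₀| < ε, and (f(b) - f(a₀))/(b - a₀) = f'(c), then c = C(b). -/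
open scoped Topology in
/-- Theorem (main I, part a): if `f` is twice continuously differentiable, `c₀` is a
mean value abscissa for `f` on `[a₀, b₀]`, and `f''(c₀) ≠ 0`, then the mean value
abscissa can locally be written as a continuously differentiable function `C` of the
right endpoint `b`, and nearby solutions are unique. -/
theorem mean_value_abscissa_of_second_deriv_ne_zero
    (f : ℝ → ℝ) (hf : ContDiff ℝ 2 f)
    (a₀ b₀ c₀ : ℝ) (hab : a₀ < b₀) (hc : c₀ ∈ Set.Ioo a₀ b₀)
    (hmv : (f b₀ - f a₀) / (b₀ - a₀) = deriv f c₀)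
    (hf'' : deriv (deriv f) c₀ ≠ 0) :
    ∃ δ > 0, ∃ ε > 0, ∃ C : ℝ → ℝ,
      C b₀ = c₀ ∧
      ContDiffOn ℝ 1 C (Set.Ioo (b₀ - δ) (b₀ + δ)) ∧
      (∀ b : ℝ, |b - b₀| < δ → (f b - f a₀) / (b - a₀) = deriv f (C b)) ∧
      (∀ b c : ℝ, |b - b₀| < δ → |c - c₀| < ε →
        (f b - f a₀) / (b - a₀) = deriv f c → c = C b) := by
  -- φ := deriv f is C¹
  have hφ : ContDiff ℝ 1 (deriv f) := by
    have h2 : ContDiff ℝ (1 + 1) f := by norm_num at hf ⊢; exact hf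
    exact (contDiff_succ_iff_deriv.mp h2).2.2
  have hφc : ContDiffAt ℝ 1 (deriv f) c₀ := hφ.contDiffAt
  set m : ℝ := deriv (deriv f) c₀ with hm
  set e : ℝ ≃L[ℝ] ℝ := ContinuousLinearEquiv.unitsEquivAut ℝ (Units.mk0 m hf'') with he
  have hder : HasFDerivAt (deriv f) (e : ℝ →L[ℝ] ℝ) c₀ := by
    have h1 : HasDerivAt (deriv f) m c₀ := (hφ.differentiable one_ne_zero c₀).hasDerivAt
    have hcoe : (e : ℝ →L[ℝ] ℝ) = ContinuousLinearMap.smulRight (1 : ℝ →L[ℝ] ℝ) m := by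
      refine ContinuousLinearMap.ext fun x => ?_
      simp [he, ContinuousLinearEquiv.unitsEquivAut_apply, mul_comm]
    rw [hcoe]
    exact hasDerivAt_iff_hasFDerivAt.mp h1
  have hS : HasStrictFDerivAt (deriv f) (e : ℝ →L[ℝ] ℝ) c₀ :=
    hφc.hasStrictFDerivAt' hder one_ne_zero
  set g : ℝ → ℝ := hS.localInverse (deriv f) e c₀ with hg
  have hg0 : g (deriv f c₀) = c₀ := hS.localInverse_apply_image
  have hgC : ContDiffAt ℝ 1 g (deriv f c₀) := hφc.to_localInverse hder one_ne_zero
  obtain ⟨U, hU, hgU⟩ := hgC.contDiffOn le_rfl (by simp)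
  obtain ⟨V, hVU, hVopen, hVmem⟩ := mem_nhds_iff.mp hU
  -- right inverse + membership in V, eventually near deriv f c₀
  have hright : ∀ᶠ y in 𝓝 (deriv f c₀), deriv f (g y) = y ∧ y ∈ V :=
    hS.eventually_right_inverse.and (hVopen.mem_nhds hVmem)
  obtain ⟨ε₁, hε₁, hball⟩ := Metric.eventually_nhds_iff.mp hright
  -- left inverse eventually near c₀
  obtain ⟨ε, hε, hleft⟩ := Metric.eventually_nhds_iff.mp hS.eventually_left_inverse
  -- continuity of v b = (f b - f a₀)/(b - a₀) at b₀
  set v : ℝ → ℝ := fun b => (f b - f a₀) / (b - a₀) with hv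
  have hvb₀ : v b₀ = deriv f c₀ := hmv
  have hvc : ContinuousAt v b₀ := by
    apply ContinuousAt.div
    · exact (hf.continuous.continuousAt).sub continuousAt_const
    · exact continuousAt_id.sub continuousAt_const
    · exact sub_ne_zero.mpr hab.ne'
  obtain ⟨δ₁, hδ₁, hδball⟩ := Metric.continuousAt_iff.mp hvc ε₁ hε₁
  refine ⟨min δ₁ (b₀ - a₀), lt_min hδ₁ (sub_pos.mpr hab), ε, hε, fun b => g (v b), ?_, ?_, ?_, ?_⟩
  · simpa [hvb₀] using hg0
  · -- ContDiffOn
    intro b hb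
    have hbδ : |b - b₀| < min δ₁ (b₀ - a₀) := by
      rw [abs_sub_lt_iff]; constructor <;> [linarith [hb.2]; linarith [hb.1]]
    have hba : b ≠ a₀ := by
      have := hb.1
      have h2 : min δ₁ (b₀ - a₀) ≤ b₀ - a₀ := min_le_right _ _
      intro h; rw [h] at this; linarith
    have hvbV : v b ∈ V := by
      have : dist (v b) (v b₀) < ε₁ :=
        hδball (lt_of_lt_of_le (by rwa [Real.dist_eq]) (min_le_left _ _))
      rw [hvb₀] at this
      exact (hball this).2
    have hvCD : ContDiffAt ℝ 1 v b := by
      apply ContDiffAt.div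
      · exact ((hf.of_le (by norm_num)).contDiffAt).sub contDiffAt_const
      · exact contDiffAt_id.sub contDiffAt_const
      · exact sub_ne_zero.mpr hba
    have hgCD : ContDiffAt ℝ 1 g (v b) :=
      hgU.contDiffAt (mem_nhds_iff.mpr ⟨V, hVU, hVopen, hvbV⟩)
    exact (hgCD.comp b hvCD).contDiffWithinAt
  · -- the equation
    intro b hbδ
    have : dist (v b) (deriv f c₀) < ε₁ := by
      rw [← hvb₀]
      exact hδball (lt_of_lt_of_le (by rwa [Real.dist_eq]) (min_le_left _ _))
    exact ((hball this).1).symm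
  · -- uniqueness
    intro b c _ hcε heq
    have h1 : g (deriv f c) = c := hleft (by rwa [Real.dist_eq])
    calc c = g (deriv f c) := h1.symm
    _ = g (v b) := by rw [← heq]
end

section
/- Let f : ℝ → ℝ be twice continuously differentiable, fix an interval [a₀, b₀] with a₀ < b₀, and let c₀ ∈ (a₀, b₀) be a mean value abscissa for f on [a₀, b₀]. Suppose f'(b₀) ≠ f'(c₀). Then there exist δ > 0, ε > 0, and a continuously differentiable function B : (c₀ - ε, c₀ + ε) → ℝ with B(c₀) = b₀ such that (f(B(c)) - f(a₀))/(B(c) - a₀) = f'(c) for all c with |c - c₀| < ε; moreover, if |b - b₀| < δ, |c - c₀| < ε, and (f(b) - f(a₀))/(b - a₀) = f'(c), then b = B(c). -/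
open Set Metric

/-- Theorem (main I, part b): if `f` is twice continuously differentiable, `c₀` is a
mean value abscissa for `f` on `[a₀, b₀]`, and `f'(b₀) ≠ f'(c₀)`, then the right
endpoint can locally be written as a continuously differentiable function `B` of the
mean value abscissa `c`, and nearby solutions are unique. -/
theorem mean_value_endpoint_of_deriv_ne
    (f : ℝ → ℝ) (hf : ContDiff ℝ 2 f)
    (a₀ b₀ c₀ : ℝ) (hab : a₀ < b₀) (hc : c₀ ∈ Set.Ioo a₀ b₀)
    (hmv : (f b₀ - f a₀) / (b₀ - a₀) = deriv f c₀)
    (hne : deriv f b₀ ≠ deriv f c₀) :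
    ∃ δ > 0, ∃ ε > 0, ∃ B : ℝ → ℝ,
      B c₀ = b₀ ∧
      ContDiffOn ℝ 1 B (Set.Ioo (c₀ - ε) (c₀ + ε)) ∧
      (∀ c : ℝ, |c - c₀| < ε → (f (B c) - f a₀) / (B c - a₀) = deriv f c) ∧
      (∀ b c : ℝ, |b - b₀| < δ → |c - c₀| < ε →
        (f b - f a₀) / (b - a₀) = deriv f c → b = B c) := by
  have hb0 : b₀ - a₀ ≠ 0 := sub_ne_zero.2 hab.ne'
  set g : ℝ → ℝ := fun b => (f b - f a₀) / (b - a₀) with hgdef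
  -- `f` is `C¹` at `b₀`
  have hfc : ContDiffAt ℝ 1 f b₀ := (hf.of_le (by norm_num)).contDiffAt
  -- `g` is `C¹` at `b₀`
  have hgC : ContDiffAt ℝ 1 g b₀ :=
    (hfc.sub contDiffAt_const).div (contDiffAt_id.sub contDiffAt_const) hb0
  -- `deriv f` is `C¹`
  have hderiv : ContDiff ℝ 1 (deriv f) := by
    have h2 : ContDiff ℝ ((1 : ℕ) + 1) f := by exact_mod_cast hf
    exact (contDiff_succ_iff_deriv.mp h2).2.2
  have hmv' : f b₀ - f a₀ = deriv f c₀ * (b₀ - a₀) := by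
    rw [div_eq_iff hb0] at hmv; exact hmv
  -- derivative of `g` at `b₀`
  set gd : ℝ := (deriv f b₀ * (b₀ - a₀) - (f b₀ - f a₀) * 1) / (b₀ - a₀) ^ 2 with hgddef
  have hgd0 : gd ≠ 0 := by
    have : gd = (deriv f b₀ - deriv f c₀) * (b₀ - a₀) / (b₀ - a₀) ^ 2 := by
      rw [hgddef, hmv']; ring_nf
    rw [this]
    exact div_ne_zero (mul_ne_zero (sub_ne_zero.2 hne) hb0) (pow_ne_zero _ hb0)
  have hfd : HasDerivAt f (deriv f b₀) b₀ := (hfc.differentiableAt one_ne_zero).hasDerivAt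
  have hgd : HasDerivAt g gd b₀ :=
    (hfd.sub_const (f a₀)).div ((hasDerivAt_id b₀).sub_const a₀) hb0
  -- inverse function theorem setup
  have hfe : HasFDerivAt g
      ((ContinuousLinearEquiv.unitsEquivAut ℝ (Units.mk0 gd hgd0)) : ℝ →L[ℝ] ℝ) b₀ :=
    hgd.hasFDerivAt_equiv hgd0
  set Φ := hgC.toOpenPartialHomeomorph g hfe one_ne_zero with hΦdef
  have hΦcoe : (Φ : ℝ → ℝ) = g := rfl
  have hsrc : b₀ ∈ Φ.source := hgC.mem_toOpenPartialHomeomorph_source hfe one_ne_zero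
  have hBinvC : ContDiffAt ℝ 1 Φ.symm (g b₀) := hgC.to_localInverse hfe one_ne_zero
  -- right inverse eventually
  have hri : ∀ᶠ y in nhds (g b₀), g (Φ.symm y) = y := by
    have := Φ.eventually_right_inverse' hsrc
    rw [hΦcoe] at this
    filter_upwards [this] with y hy
    rw [← hΦcoe]; exact hy
  -- `C¹` of inverse on a neighborhood
  obtain ⟨u, hu, huC⟩ := hBinvC.contDiffOn le_rfl (by simp)
  -- neighborhood in `c`
  have hgb : g b₀ = deriv f c₀ := hmv
  have hcont : ContinuousAt (deriv f) c₀ := hderiv.continuous.continuousAt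
  have hV : (deriv f) ⁻¹' (u ∩ {y | g (Φ.symm y) = y}) ∈ nhds c₀ := by
    apply hcont
    rw [← hgb]
    exact Filter.inter_mem hu hri
  obtain ⟨ε, hε, hball⟩ := Metric.mem_nhds_iff.mp hV
  -- δ from openness of the source
  obtain ⟨δ, hδ, hδball⟩ := Metric.isOpen_iff.mp Φ.open_source b₀ hsrc
  refine ⟨δ, hδ, ε, hε, fun c => Φ.symm (deriv f c), ?_, ?_, ?_, ?_⟩
  · show Φ.symm (deriv f c₀) = b₀
    rw [← hgb]
    have := Φ.left_inv hsrc
    rwa [hΦcoe] at this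
  · -- ContDiffOn on the interval
    have hIoo : Set.Ioo (c₀ - ε) (c₀ + ε) = Metric.ball c₀ ε := (Real.ball_eq_Ioo c₀ ε).symm
    rw [hIoo]
    refine huC.comp (hderiv.contDiffOn) ?_
    intro c hcball
    exact (hball hcball).1
  · intro c hcε
    have hcball : c ∈ Metric.ball c₀ ε := by
      rw [Metric.mem_ball, Real.dist_eq]; exact hcε
    exact (hball hcball).2
  · intro b c hbδ hcε heq
    have hbsrc : b ∈ Φ.source := hδball (by rw [Metric.mem_ball, Real.dist_eq]; exact hbδ)
    have h1 : Φ.symm (Φ b) = b := Φ.left_inv hbsrc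
    have h2 : (Φ : ℝ → ℝ) b = deriv f c := by rw [hΦcoe]; exact heq
    rw [← h1, h2]
end

section
/- Let G : ℝ² → ℝ be three-times continuously differentiable on a neighborhood of the origin with G(0,0) = G_x(0,0) = G_y(0,0) = 0 and G_{xx}(0,0)·G_{yy}(0,0) - (G_{xy}(0,0))² ≠ 0. Then there exist open neighborhoods U and V of the origin in ℝ², a map Φ : U → V with Φ(0,0) = (0,0) which is a bijection onto V such that both Φ and its inverse are continuously differentiable, and signs ε₁, ε₂ ∈ {+1, -1}, such that for all (x, y) ∈ U, writing (u, v) = Φ(x, y), one has G(x, y) = ε₁·u² + ε₂·v². -/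
set_option maxHeartbeats 1000000

open Set MeasureTheory intervalIntegral Metric Filter Topology Interval



/-- Partial derivative of `G : ℝ → ℝ → ℝ` with respect to the first variable. -/
noncomputable def pdx (G : ℝ → ℝ → ℝ) (x y : ℝ) : ℝ := deriv (fun t => G t y) x

/-- Partial derivative of `G : ℝ → ℝ → ℝ` with respect to the second variable. -/
noncomputable def pdy (G : ℝ → ℝ → ℝ) (x y : ℝ) : ℝ := deriv (fun t => G x t) y

lemma morse_smul_mem_ball {p : ℝ × ℝ} {r t : ℝ} (hp : p ∈ ball (0:ℝ×ℝ) r)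
    (ht0 : 0 ≤ t) (ht1 : t ≤ 1) : t • p ∈ ball (0:ℝ×ℝ) r := by
  rw [mem_ball_zero_iff] at hp ⊢
  calc ‖t • p‖ = |t| * ‖p‖ := by rw [norm_smul, Real.norm_eq_abs]
  _ ≤ 1 * ‖p‖ := by
      apply mul_le_mul_of_nonneg_right _ (norm_nonneg _)
      rw [abs_of_nonneg ht0]; exact ht1
  _ < r := by simpa using hp

lemma morse_paramInt {g : ℝ × ℝ → ℝ} {r : ℝ}
    (hg : ContDiffOn ℝ 1 g (ball 0 r)) :
    ContDiffOn ℝ 1 (fun p : ℝ × ℝ => ∫ t in (0:ℝ)..1, (1 - t) * g (t • p))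
      (ball (0:ℝ×ℝ) r) := by
  set A : (ℝ × ℝ) → ℝ := fun p => ∫ t in (0:ℝ)..1, (1 - t) * g (t • p) with hA
  set A' : (ℝ × ℝ) → (ℝ × ℝ →L[ℝ] ℝ) :=
    fun p => ∫ t in (0:ℝ)..1, ((1 - t) * t) • fderiv ℝ g (t • p) with hA'
  have hgc : ContinuousOn g (ball 0 r) := hg.continuousOn
  have hdc : ContinuousOn (fderiv ℝ g) (ball 0 r) :=
    hg.continuousOn_fderiv_of_isOpen isOpen_ball le_rfl
  -- measurability of the two integrands for x in the ball
  have hmeas1 : ∀ x ∈ ball (0:ℝ×ℝ) r,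
      AEStronglyMeasurable (fun t => (1 - t) * g (t • x))
        (volume.restrict (Ι (0:ℝ) 1)) := by
    intro x hx
    apply ContinuousOn.aestronglyMeasurable _ measurableSet_uIoc
    have : ContinuousOn (fun t : ℝ => g (t • x)) (Ι (0:ℝ) 1) := by
      apply hgc.comp (by fun_prop)
      intro t ht
      rw [uIoc_of_le (by norm_num : (0:ℝ) ≤ 1)] at ht
      exact morse_smul_mem_ball hx ht.1.le ht.2
    exact (continuousOn_const.sub continuousOn_id).mul this
  have hmeas2 : ∀ x ∈ ball (0:ℝ×ℝ) r,
      AEStronglyMeasurable (fun t => ((1 - t) * t) • fderiv ℝ g (t • x))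
        (volume.restrict (Ι (0:ℝ) 1)) := by
    intro x hx
    apply ContinuousOn.aestronglyMeasurable _ measurableSet_uIoc
    have : ContinuousOn (fun t : ℝ => fderiv ℝ g (t • x)) (Ι (0:ℝ) 1) := by
      apply hdc.comp (by fun_prop)
      intro t ht
      rw [uIoc_of_le (by norm_num : (0:ℝ) ≤ 1)] at ht
      exact morse_smul_mem_ball hx ht.1.le ht.2
    exact ContinuousOn.smul (f := fun t : ℝ => (1 - t) * t) (by fun_prop) this
  -- the key differentiability claim
  have hder : ∀ p₀ ∈ ball (0:ℝ×ℝ) r, HasFDerivAt A (A' p₀) p₀ := by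
    intro p₀ hp₀
    rw [mem_ball_zero_iff] at hp₀
    set ρ : ℝ := (‖p₀‖ + r) / 2 with hρ
    have hρ1 : ‖p₀‖ < ρ := by rw [hρ]; linarith
    have hρ2 : ρ < r := by rw [hρ]; linarith
    have hρ0 : 0 ≤ ρ := le_trans (norm_nonneg _) hρ1.le
    have hsub : closedBall (0:ℝ×ℝ) ρ ⊆ ball 0 r := closedBall_subset_ball hρ2
    obtain ⟨M, hM⟩ := (isCompact_closedBall (0:ℝ×ℝ) ρ).exists_bound_of_continuousOn
      (hdc.mono hsub)
    set ε : ℝ := ρ - ‖p₀‖ with hε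
    have hε0 : 0 < ε := by rw [hε]; linarith
    have hball : ball p₀ ε ⊆ ball (0:ℝ×ℝ) ρ := by
      intro x hx
      rw [mem_ball, dist_eq_norm] at hx
      rw [mem_ball_zero_iff]
      calc ‖x‖ = ‖p₀ + (x - p₀)‖ := by ring_nf
      _ ≤ ‖p₀‖ + ‖x - p₀‖ := norm_add_le _ _
      _ < ‖p₀‖ + ε := by linarith [hx]
      _ = ρ := by rw [hε]; ring
    have key := intervalIntegral.hasFDerivAt_integral_of_dominated_of_fderiv_le
      (F := fun x t => (1 - t) * g (t • x))
      (F' := fun x t => ((1 - t) * t) • fderiv ℝ g (t • x))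
      (bound := fun _ => |M| + 1) (μ := volume) (a := 0) (b := 1) (x₀ := p₀) (ball_mem_nhds p₀ hε0)
      ?_ ?_ ?_ ?_ ?_ ?_
    · exact key
    · filter_upwards [isOpen_ball.eventually_mem (mem_ball_zero_iff.mpr hp₀)] with x hx
      exact hmeas1 x hx
    · apply ContinuousOn.intervalIntegrable
      rw [uIcc_of_le (by norm_num : (0:ℝ) ≤ 1)]
      have : ContinuousOn (fun t : ℝ => g (t • p₀)) (Icc (0:ℝ) 1) := by
        apply hgc.comp (by fun_prop)
        intro t ht
        exact morse_smul_mem_ball (mem_ball_zero_iff.mpr hp₀) ht.1 ht.2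
      exact (continuousOn_const.sub continuousOn_id).mul this
    · exact hmeas2 p₀ (mem_ball_zero_iff.mpr hp₀)
    · apply Eventually.of_forall
      intro t ht x hx
      rw [uIoc_of_le (by norm_num : (0:ℝ) ≤ 1)] at ht
      have hxρ : t • x ∈ closedBall (0:ℝ×ℝ) ρ :=
        ball_subset_closedBall (morse_smul_mem_ball (hball hx) ht.1.le ht.2)
      calc ‖((1 - t) * t) • fderiv ℝ g (t • x)‖
          = |(1 - t) * t| * ‖fderiv ℝ g (t • x)‖ := by rw [norm_smul, Real.norm_eq_abs]
      _ ≤ 1 * (|M| + 1) := by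
          apply mul_le_mul
          · rw [abs_mul]
            have h1 : |1 - t| ≤ 1 := by rw [abs_le]; constructor <;> nlinarith [ht.1, ht.2]
            have h2 : |t| ≤ 1 := by rw [abs_le]; constructor <;> nlinarith [ht.1, ht.2]
            nlinarith [abs_nonneg (1-t), abs_nonneg t]
          · calc ‖fderiv ℝ g (t • x)‖ ≤ M := hM _ hxρ
            _ ≤ |M| + 1 := by have := le_abs_self M; linarith
          · exact norm_nonneg _
          · norm_num
      _ = |M| + 1 := by ring
    · exact intervalIntegrable_const
    · apply Eventually.of_forall
      intro t ht x hx
      rw [uIoc_of_le (by norm_num : (0:ℝ) ≤ 1)] at ht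
      have hmem : t • x ∈ ball (0:ℝ×ℝ) r :=
        morse_smul_mem_ball (hsub (ball_subset_closedBall (hball hx))) ht.1.le ht.2
      have hdg : DifferentiableAt ℝ g (t • x) :=
        (hg.differentiableOn one_ne_zero).differentiableAt (isOpen_ball.mem_nhds hmem)
      have hL : HasFDerivAt (fun y : ℝ × ℝ => t • y)
          (t • ContinuousLinearMap.id ℝ (ℝ × ℝ)) x :=
        (t • ContinuousLinearMap.id ℝ (ℝ × ℝ)).hasFDerivAt
      have hcomp : HasFDerivAt (fun y : ℝ × ℝ => g (t • y))
          ((fderiv ℝ g (t • x)).comp (t • ContinuousLinearMap.id ℝ (ℝ × ℝ))) x :=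
        hdg.hasFDerivAt.comp x hL
      have h2 := hcomp.const_mul (1 - t)
      have heq : ((1 - t) • (fderiv ℝ g (t • x)).comp (t • ContinuousLinearMap.id ℝ (ℝ × ℝ)))
          = ((1 - t) * t) • fderiv ℝ g (t • x) := by
        apply ContinuousLinearMap.ext
        intro v
        simp [ContinuousLinearMap.smul_apply, smul_eq_mul]
        ring
      rwa [heq] at h2
  -- continuity of the candidate derivative
  have hcont : ∀ p₀ ∈ ball (0:ℝ×ℝ) r, ContinuousAt A' p₀ := by
    intro p₀ hp₀
    rw [mem_ball_zero_iff] at hp₀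
    set ρ : ℝ := (‖p₀‖ + r) / 2 with hρ
    have hρ1 : ‖p₀‖ < ρ := by rw [hρ]; linarith
    have hρ2 : ρ < r := by rw [hρ]; linarith
    have hsub : closedBall (0:ℝ×ℝ) ρ ⊆ ball 0 r := closedBall_subset_ball hρ2
    obtain ⟨M, hM⟩ := (isCompact_closedBall (0:ℝ×ℝ) ρ).exists_bound_of_continuousOn
      (hdc.mono hsub)
    set ε : ℝ := ρ - ‖p₀‖ with hε
    have hε0 : 0 < ε := by rw [hε]; linarith
    have hball : ball p₀ ε ⊆ ball (0:ℝ×ℝ) ρ := by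
      intro x hx
      rw [mem_ball, dist_eq_norm] at hx
      rw [mem_ball_zero_iff]
      calc ‖x‖ = ‖p₀ + (x - p₀)‖ := by ring_nf
      _ ≤ ‖p₀‖ + ‖x - p₀‖ := norm_add_le _ _
      _ < ‖p₀‖ + ε := by linarith [hx]
      _ = ρ := by rw [hε]; ring
    apply intervalIntegral.continuousAt_of_dominated_interval
      (bound := fun _ => |M| + 1)
    · filter_upwards [isOpen_ball.eventually_mem (mem_ball_zero_iff.mpr hp₀)] with x hx
      exact hmeas2 x hx
    · filter_upwards [ball_mem_nhds p₀ hε0] with x hx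
      apply Eventually.of_forall
      intro t ht
      rw [uIoc_of_le (by norm_num : (0:ℝ) ≤ 1)] at ht
      have hxρ : t • x ∈ closedBall (0:ℝ×ℝ) ρ :=
        ball_subset_closedBall (morse_smul_mem_ball (hball hx) ht.1.le ht.2)
      calc ‖((1 - t) * t) • fderiv ℝ g (t • x)‖
          = |(1 - t) * t| * ‖fderiv ℝ g (t • x)‖ := by rw [norm_smul, Real.norm_eq_abs]
      _ ≤ 1 * (|M| + 1) := by
          apply mul_le_mul
          · rw [abs_mul]
            have h1 : |1 - t| ≤ 1 := by rw [abs_le]; constructor <;> nlinarith [ht.1, ht.2]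
            have h2 : |t| ≤ 1 := by rw [abs_le]; constructor <;> nlinarith [ht.1, ht.2]
            nlinarith [abs_nonneg (1-t), abs_nonneg t]
          · calc ‖fderiv ℝ g (t • x)‖ ≤ M := hM _ hxρ
            _ ≤ |M| + 1 := by have := le_abs_self M; linarith
          · exact norm_nonneg _
          · norm_num
      _ = |M| + 1 := by ring
    · exact intervalIntegrable_const
    · apply Eventually.of_forall
      intro t ht
      rw [uIoc_of_le (by norm_num : (0:ℝ) ≤ 1)] at ht
      have hmem : t • p₀ ∈ ball (0:ℝ×ℝ) r :=
        morse_smul_mem_ball (mem_ball_zero_iff.mpr hp₀) ht.1.le ht.2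
      have : ContinuousAt (fun x : ℝ × ℝ => fderiv ℝ g (t • x)) p₀ := by
        apply (hdc.continuousAt (isOpen_ball.mem_nhds hmem)).comp
        fun_prop
      exact this.const_smul ((1 - t) * t)
  -- assemble
  rw [show (1 : WithTop ℕ∞) = 0 + 1 from rfl, contDiffOn_succ_iff_fderiv_of_isOpen isOpen_ball]
  refine ⟨fun p hp => ((hder p hp).differentiableAt).differentiableWithinAt, by simp, ?_⟩
  rw [contDiffOn_zero]
  apply ContinuousOn.congr (f := A')
  · exact fun p hp => (hcont p hp).continuousWithinAt
  · exact fun p hp => (hder p hp).fderiv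

lemma morse_clm2_expand (L : ℝ × ℝ →L[ℝ] (ℝ × ℝ →L[ℝ] ℝ)) (p : ℝ × ℝ) :
    L p p = p.1 ^ 2 * L (1, 0) (1, 0) + p.1 * p.2 * L (1, 0) (0, 1)
      + p.1 * p.2 * L (0, 1) (1, 0) + p.2 ^ 2 * L (0, 1) (0, 1) := by
  have hp' : p = p.1 • ((1:ℝ), (0:ℝ)) + p.2 • ((0:ℝ), (1:ℝ)) := by simp [Prod.ext_iff]
  conv_lhs => rw [hp']
  simp only [_root_.map_add, _root_.map_smul, ContinuousLinearMap.add_apply,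
    ContinuousLinearMap.coe_smul', Pi.smul_apply, smul_eq_mul]
  ring

lemma morse_taylor {F : ℝ × ℝ → ℝ} {r : ℝ}
    (hF : ContDiffOn ℝ 3 F (ball 0 r)) (hF0 : F 0 = 0) (hdF : fderiv ℝ F 0 = 0)
    {p : ℝ × ℝ} (hp : p ∈ ball (0:ℝ×ℝ) r) :
    F p = ∫ t in (0:ℝ)..1, (1 - t) * (fderiv ℝ (fderiv ℝ F) (t • p) p p) := by
  set H := fderiv ℝ (fderiv ℝ F) with hH
  have hF1 : ContDiffOn ℝ 2 (fderiv ℝ F) (ball 0 r) :=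
    hF.fderiv_of_isOpen isOpen_ball (by norm_num)
  have hH1 : ContDiffOn ℝ 1 H (ball 0 r) :=
    hF1.fderiv_of_isOpen isOpen_ball (by norm_num)
  set ψ : ℝ → ℝ := fun t => F (t • p) + (1 - t) * (fderiv ℝ F (t • p) p) with hψdef
  have hψ : ∀ t ∈ uIcc (0:ℝ) 1, HasDerivAt ψ ((1 - t) * (H (t • p) p p)) t := by
    intro t ht
    rw [uIcc_of_le (by norm_num : (0:ℝ) ≤ 1)] at ht
    have hmem : t • p ∈ ball (0:ℝ×ℝ) r := morse_smul_mem_ball hp ht.1 ht.2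
    have hline : HasDerivAt (fun s : ℝ => s • p) p t := by
      simpa using (hasDerivAt_id t).smul_const p
    have h1 : HasDerivAt (fun s : ℝ => F (s • p)) (fderiv ℝ F (t • p) p) t :=
      (((hF.differentiableOn (by norm_num)).differentiableAt
        (isOpen_ball.mem_nhds hmem)).hasFDerivAt).comp_hasDerivAt t hline
    have hdF1 : HasFDerivAt (fderiv ℝ F) (H (t • p)) (t • p) :=
      ((hF1.differentiableOn (by norm_num)).differentiableAt
        (isOpen_ball.mem_nhds hmem)).hasFDerivAt
    have h2 : HasDerivAt (fun s : ℝ => fderiv ℝ F (s • p)) (H (t • p) p) t :=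
      hdF1.comp_hasDerivAt t hline
    have h3 : HasDerivAt (fun s : ℝ => fderiv ℝ F (s • p) p) (H (t • p) p p) t := by
      simpa using h2.clm_apply (hasDerivAt_const t p)
    have h4 : HasDerivAt (fun s : ℝ => (1 - s)) (-1) t := by
      simpa using (hasDerivAt_id t).const_sub 1
    have h5 := h1.add (h4.mul h3)
    exact h5.congr_deriv (by ring)
  have hInt : IntervalIntegrable (fun t => (1 - t) * (H (t • p) p p)) volume 0 1 := by
    apply ContinuousOn.intervalIntegrable
    rw [uIcc_of_le (by norm_num : (0:ℝ) ≤ 1)]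
    have hsm : ContinuousOn (fun t : ℝ => H (t • p)) (Icc (0:ℝ) 1) := by
      apply hH1.continuousOn.comp (by fun_prop)
      intro t ht
      exact morse_smul_mem_ball hp ht.1 ht.2
    exact (continuousOn_const.sub continuousOn_id).mul
      ((hsm.clm_apply continuousOn_const).clm_apply continuousOn_const)
  have hint := intervalIntegral.integral_eq_sub_of_hasDerivAt hψ hInt
  rw [hint, hψdef]
  simp [hF0, hdF]

lemma morse_rep {F : ℝ × ℝ → ℝ} {r : ℝ}
    (hF : ContDiffOn ℝ 3 F (ball 0 r)) (hF0 : F 0 = 0) (hdF : fderiv ℝ F 0 = 0) :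
    ∃ A B C : ℝ × ℝ → ℝ,
      ContDiffOn ℝ 1 A (ball 0 r) ∧ ContDiffOn ℝ 1 B (ball 0 r) ∧
      ContDiffOn ℝ 1 C (ball 0 r) ∧
      (∀ p ∈ ball (0:ℝ×ℝ) r,
        F p = p.1 ^ 2 * A p + 2 * (p.1 * p.2) * B p + p.2 ^ 2 * C p) ∧
      A 0 = fderiv ℝ (fderiv ℝ F) 0 (1, 0) (1, 0) / 2 ∧
      B 0 = fderiv ℝ (fderiv ℝ F) 0 (1, 0) (0, 1) / 2 ∧
      C 0 = fderiv ℝ (fderiv ℝ F) 0 (0, 1) (0, 1) / 2 := by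
  set H := fderiv ℝ (fderiv ℝ F) with hH
  have hF1 : ContDiffOn ℝ 2 (fderiv ℝ F) (ball 0 r) :=
    hF.fderiv_of_isOpen isOpen_ball (by norm_num)
  have hH1 : ContDiffOn ℝ 1 H (ball 0 r) :=
    hF1.fderiv_of_isOpen isOpen_ball (by norm_num)
  set a : ℝ × ℝ → ℝ := fun q => H q (1, 0) (1, 0) with ha
  set b : ℝ × ℝ → ℝ := fun q => H q (1, 0) (0, 1) with hb
  set c : ℝ × ℝ → ℝ := fun q => H q (0, 1) (0, 1) with hc
  have hac : ContDiffOn ℝ 1 a (ball 0 r) :=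
    (hH1.clm_apply contDiffOn_const).clm_apply contDiffOn_const
  have hbc : ContDiffOn ℝ 1 b (ball 0 r) :=
    (hH1.clm_apply contDiffOn_const).clm_apply contDiffOn_const
  have hcc : ContDiffOn ℝ 1 c (ball 0 r) :=
    (hH1.clm_apply contDiffOn_const).clm_apply contDiffOn_const
  refine ⟨fun p => ∫ t in (0:ℝ)..1, (1 - t) * a (t • p),
          fun p => ∫ t in (0:ℝ)..1, (1 - t) * b (t • p),
          fun p => ∫ t in (0:ℝ)..1, (1 - t) * c (t • p),
          morse_paramInt hac, morse_paramInt hbc, morse_paramInt hcc, ?_, ?_, ?_, ?_⟩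
  · intro p hp
    rw [morse_taylor hF hF0 hdF hp]
    -- pointwise expansion of the Hessian quadratic form
    have hexp : ∀ t ∈ uIcc (0:ℝ) 1,
        (1 - t) * (H (t • p) p p)
          = p.1 ^ 2 * ((1 - t) * a (t • p)) + 2 * (p.1 * p.2) * ((1 - t) * b (t • p))
            + p.2 ^ 2 * ((1 - t) * c (t • p)) := by
      intro t ht
      rw [uIcc_of_le (by norm_num : (0:ℝ) ≤ 1)] at ht
      have hmem : t • p ∈ ball (0:ℝ×ℝ) r := morse_smul_mem_ball hp ht.1 ht.2
      have hsym : H (t • p) (0, 1) (1, 0) = H (t • p) (1, 0) (0, 1) :=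
        (hF.contDiffAt (isOpen_ball.mem_nhds hmem)).isSymmSndFDerivAt (by norm_num) _ _
      have hq : H (t • p) p p
          = p.1 ^ 2 * a (t • p) + 2 * (p.1 * p.2) * b (t • p) + p.2 ^ 2 * c (t • p) := by
        rw [morse_clm2_expand (H (t • p)) p, hsym, ha, hb, hc]
        ring
      rw [hq]; ring
    rw [intervalIntegral.integral_congr hexp]
    have hia : IntervalIntegrable (fun t => (1 - t) * a (t • p)) volume 0 1 := by
      apply ContinuousOn.intervalIntegrable
      rw [uIcc_of_le (by norm_num : (0:ℝ) ≤ 1)]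
      refine (continuousOn_const.sub continuousOn_id).mul (hac.continuousOn.comp (by fun_prop) ?_)
      intro t ht; exact morse_smul_mem_ball hp ht.1 ht.2
    have hib : IntervalIntegrable (fun t => (1 - t) * b (t • p)) volume 0 1 := by
      apply ContinuousOn.intervalIntegrable
      rw [uIcc_of_le (by norm_num : (0:ℝ) ≤ 1)]
      refine (continuousOn_const.sub continuousOn_id).mul (hbc.continuousOn.comp (by fun_prop) ?_)
      intro t ht; exact morse_smul_mem_ball hp ht.1 ht.2
    have hic : IntervalIntegrable (fun t => (1 - t) * c (t • p)) volume 0 1 := by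
      apply ContinuousOn.intervalIntegrable
      rw [uIcc_of_le (by norm_num : (0:ℝ) ≤ 1)]
      refine (continuousOn_const.sub continuousOn_id).mul (hcc.continuousOn.comp (by fun_prop) ?_)
      intro t ht; exact morse_smul_mem_ball hp ht.1 ht.2
    rw [intervalIntegral.integral_add ((hia.const_mul _).add (hib.const_mul _)) (hic.const_mul _),
        intervalIntegral.integral_add (hia.const_mul _) (hib.const_mul _),
        intervalIntegral.integral_const_mul, intervalIntegral.integral_const_mul,
        intervalIntegral.integral_const_mul]
  · simp only [smul_zero]
    rw [intervalIntegral.integral_mul_const]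
    have : (∫ t in (0:ℝ)..1, (1 - t)) = 1 / 2 := by
      rw [intervalIntegral.integral_sub intervalIntegrable_const intervalIntegrable_id,
        integral_id, intervalIntegral.integral_const]
      norm_num
    rw [this]; rw [ha]; ring
  · simp only [smul_zero]
    rw [intervalIntegral.integral_mul_const]
    have : (∫ t in (0:ℝ)..1, (1 - t)) = 1 / 2 := by
      rw [intervalIntegral.integral_sub intervalIntegrable_const intervalIntegrable_id,
        integral_id, intervalIntegral.integral_const]
      norm_num
    rw [this]; rw [hb]; ring
  · simp only [smul_zero]
    rw [intervalIntegral.integral_mul_const]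
    have : (∫ t in (0:ℝ)..1, (1 - t)) = 1 / 2 := by
      rw [intervalIntegral.integral_sub intervalIntegrable_const intervalIntegrable_id,
        integral_id, intervalIntegral.integral_const]
      norm_num
    rw [this]; rw [hc]; ring

def MC (F : ℝ × ℝ → ℝ) : Prop :=
  ∃ U V : Set (ℝ × ℝ), IsOpen U ∧ IsOpen V ∧ (0, 0) ∈ U ∧ (0, 0) ∈ V ∧
    ∃ Φ Ψ : ℝ × ℝ → ℝ × ℝ,
      Φ (0, 0) = (0, 0) ∧
      Set.BijOn Φ U V ∧
      ContDiffOn ℝ 1 Φ U ∧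
      ContDiffOn ℝ 1 Ψ V ∧
      (∀ p ∈ U, Ψ (Φ p) = p) ∧
      (∀ q ∈ V, Φ (Ψ q) = q) ∧
      ∃ ε₁ ε₂ : ℝ, (ε₁ = 1 ∨ ε₁ = -1) ∧ (ε₂ = 1 ∨ ε₂ = -1) ∧
        ∀ p ∈ U, F p = ε₁ * (Φ p).1 ^ 2 + ε₂ * (Φ p).2 ^ 2

lemma morse_transport {F : ℝ × ℝ → ℝ} (L : (ℝ × ℝ) ≃L[ℝ] (ℝ × ℝ))
    (h : MC (fun p => F (L p))) : MC F := by
  obtain ⟨U, V, hUo, hVo, hU0, hV0, Φ, Ψ, hΦ0, hbij, hΦc, hΨc, hlinv, hrinv,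
    ε₁, ε₂, hε₁, hε₂, hform⟩ := h
  have hz : (L.symm : (ℝ×ℝ) → (ℝ×ℝ)) (0, 0) = (0, 0) := by
    have := map_zero L.symm
    simpa [Prod.mk_zero_zero] using this
  have hzL : (L : (ℝ×ℝ) → (ℝ×ℝ)) (0, 0) = (0, 0) := by
    have := map_zero L
    simpa [Prod.mk_zero_zero] using this
  refine ⟨(L.symm : (ℝ×ℝ) → (ℝ×ℝ)) ⁻¹' U, V, ?_, hVo, ?_, hV0,
    Φ ∘ (L.symm : (ℝ×ℝ) → (ℝ×ℝ)), (L : (ℝ×ℝ) → (ℝ×ℝ)) ∘ Ψ, ?_, ?_, ?_, ?_, ?_, ?_,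
    ε₁, ε₂, hε₁, hε₂, ?_⟩
  · exact hUo.preimage L.symm.continuous
  · simp only [mem_preimage, hz]; exact hU0
  · simp only [Function.comp_apply, hz, hΦ0]
  · apply hbij.comp
    refine ⟨fun x hx => hx, L.symm.injective.injOn, ?_⟩
    intro u hu
    exact ⟨L u, by simp [hu], by simp⟩
  · exact hΦc.comp (L.symm.contDiff.contDiffOn) (fun x hx => hx)
  · exact (L.contDiff.contDiffOn).comp hΨc (mapsTo_univ _ _)
  · intro p hp
    simp only [Function.comp_apply]
    rw [hlinv _ hp]
    simp
  · intro q hq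
    simp only [Function.comp_apply]
    rw [ContinuousLinearEquiv.symm_apply_apply, hrinv _ hq]
  · intro p hp
    have := hform _ hp
    simpa using this

noncomputable def morse_shearLin : (ℝ × ℝ) ≃ₗ[ℝ] (ℝ × ℝ) where
  toFun p := (p.1, p.1 + p.2)
  invFun q := (q.1, q.2 - q.1)
  map_add' p q := by simp [Prod.ext_iff]; ring
  map_smul' c p := by simp [Prod.ext_iff, smul_eq_mul]; ring
  left_inv p := by simp
  right_inv q := by simp

noncomputable def morse_shear : (ℝ × ℝ) ≃L[ℝ] (ℝ × ℝ) :=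
  morse_shearLin.toContinuousLinearEquiv

@[simp] lemma morse_shear_apply (p : ℝ × ℝ) : morse_shear p = (p.1, p.1 + p.2) := rfl

lemma morse_core {F A B C : ℝ × ℝ → ℝ}
    (hA : ContDiffAt ℝ 1 A 0) (hB : ContDiffAt ℝ 1 B 0) (hC : ContDiffAt ℝ 1 C 0)
    (hA0 : A 0 ≠ 0) (hD0 : A 0 * C 0 - B 0 ^ 2 ≠ 0)
    (hrep : ∀ᶠ p in 𝓝 (0:ℝ×ℝ),
      F p = p.1 ^ 2 * A p + 2 * (p.1 * p.2) * B p + p.2 ^ 2 * C p) : MC F := by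
  classical
  set D : ℝ × ℝ → ℝ := fun p => (A p * C p - B p ^ 2) / A p with hDdef
  have hDne : D 0 ≠ 0 := div_ne_zero hD0 hA0
  set α : ℝ := if 0 < A 0 then 1 else -1 with hα
  set β : ℝ := if 0 < D 0 then 1 else -1 with hβ
  have hα1 : α = 1 ∨ α = -1 := by rw [hα]; split <;> simp
  have hβ1 : β = 1 ∨ β = -1 := by rw [hβ]; split <;> simp
  have hαA : 0 < α * A 0 := by
    rw [hα]; split
    · simpa
    · rename_i h
      have : A 0 < 0 := lt_of_le_of_ne (not_lt.1 h) hA0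
      nlinarith
  have hβD : 0 < β * D 0 := by
    rw [hβ]; split
    · simpa
    · rename_i h
      have : D 0 < 0 := lt_of_le_of_ne (not_lt.1 h) hDne
      nlinarith
  have hα2 : α * α = 1 := by rcases hα1 with h | h <;> rw [h] <;> norm_num
  have hβ2 : β * β = 1 := by rcases hβ1 with h | h <;> rw [h] <;> norm_num
  -- neighborhood where everything holds
  obtain ⟨uA, huA, hAon⟩ := hA.contDiffOn le_rfl (by simp)
  obtain ⟨uB, huB, hBon⟩ := hB.contDiffOn le_rfl (by simp)
  obtain ⟨uC, huC, hCon⟩ := hC.contDiffOn le_rfl (by simp)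
  have hDc : ContinuousAt D 0 :=
    (((hA.continuousAt.mul hC.continuousAt).sub
      (hB.continuousAt.pow 2)).div hA.continuousAt hA0)
  have hev1 : ∀ᶠ p in 𝓝 (0:ℝ×ℝ), 0 < α * A p :=
    (continuousAt_const.mul hA.continuousAt).eventually_mem (isOpen_Ioi.mem_nhds hαA)
  have hev2 : ∀ᶠ p in 𝓝 (0:ℝ×ℝ), 0 < β * D p :=
    (continuousAt_const.mul hDc).eventually_mem (isOpen_Ioi.mem_nhds hβD)
  have hbig : ∀ᶠ p in 𝓝 (0:ℝ×ℝ),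
      (F p = p.1 ^ 2 * A p + 2 * (p.1 * p.2) * B p + p.2 ^ 2 * C p
        ∧ 0 < α * A p ∧ 0 < β * D p)
      ∧ (p ∈ interior uA ∧ p ∈ interior uB ∧ p ∈ interior uC) := by
    filter_upwards [hrep, hev1, hev2, interior_mem_nhds.2 huA,
      interior_mem_nhds.2 huB, interior_mem_nhds.2 huC] with p h1 h2 h3 h4 h5 h6
    exact ⟨⟨h1, h2, h3⟩, h4, h5, h6⟩
  obtain ⟨W, hWsub, hWo, hW0⟩ := _root_.eventually_nhds_iff.1 hbig
  -- basic facts at points of W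
  have hWA : ∀ p ∈ W, A p ≠ 0 := by
    intro p hp
    have := (hWsub p hp).1.2.1
    intro h; rw [h] at this; simp at this
  have hADW : ∀ p ∈ W, ContDiffAt ℝ 1 A p := fun p hp =>
    (hAon.mono interior_subset).contDiffAt (isOpen_interior.mem_nhds (hWsub p hp).2.1)
  have hBDW : ∀ p ∈ W, ContDiffAt ℝ 1 B p := fun p hp =>
    (hBon.mono interior_subset).contDiffAt (isOpen_interior.mem_nhds (hWsub p hp).2.2.1)
  have hCDW : ∀ p ∈ W, ContDiffAt ℝ 1 C p := fun p hp =>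
    (hCon.mono interior_subset).contDiffAt (isOpen_interior.mem_nhds (hWsub p hp).2.2.2)
  have hDDW : ∀ p ∈ W, ContDiffAt ℝ 1 D p := fun p hp =>
    (((hADW p hp).mul (hCDW p hp)).sub ((hBDW p hp).pow 2)).div (hADW p hp) (hWA p hp)
  -- the map Φ
  set f : ℝ × ℝ → ℝ := fun p => Real.sqrt (α * A p) with hfdef
  set g : ℝ × ℝ → ℝ := fun p => Real.sqrt (β * D p) with hgdef
  set Φ : ℝ × ℝ → ℝ × ℝ :=
    fun p => (f p * (p.1 + B p / A p * p.2), g p * p.2) with hΦdef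
  have hΦc : ContDiffOn ℝ 1 Φ W := by
    intro p hp
    have h1 : ContDiffAt ℝ 1 f p :=
      (contDiffAt_const.mul (hADW p hp)).sqrt (ne_of_gt (hWsub p hp).1.2.1)
    have h2 : ContDiffAt ℝ 1 g p :=
      (contDiffAt_const.mul (hDDW p hp)).sqrt (ne_of_gt (hWsub p hp).1.2.2)
    have h3 : ContDiffAt ℝ 1 (fun q : ℝ×ℝ => q.1 + B q / A q * q.2) p :=
      contDiff_fst.contDiffAt.add
        ((((hBDW p hp).div (hADW p hp) (hWA p hp))).mul contDiff_snd.contDiffAt)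
    exact ((h1.mul h3).prodMk (h2.mul contDiff_snd.contDiffAt)).contDiffWithinAt
  have hΦ0 : Φ 0 = 0 := by
    simp [hΦdef, Prod.ext_iff]
  -- key identity on W
  have hkey : ∀ p ∈ W, F p = α * (Φ p).1 ^ 2 + β * (Φ p).2 ^ 2 := by
    intro p hp
    obtain ⟨⟨h1, h2, h3⟩, -⟩ := hWsub p hp
    have hf2 : f p ^ 2 = α * A p := Real.sq_sqrt h2.le
    have hg2 : g p ^ 2 = β * D p := Real.sq_sqrt h3.le
    have hAne := hWA p hp
    have : α * (Φ p).1 ^ 2 + β * (Φ p).2 ^ 2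
        = (α * α) * A p * (p.1 + B p / A p * p.2) ^ 2 + (β * β) * D p * p.2 ^ 2 := by
      simp only [hΦdef]
      rw [mul_pow, mul_pow, hf2, hg2]
      ring
    rw [this, hα2, hβ2, h1, hDdef]
    field_simp
    ring
  -- derivative of Φ at 0
  have hf0pos : 0 < f 0 := Real.sqrt_pos.2 hαA
  have hg0pos : 0 < g 0 := Real.sqrt_pos.2 hβD
  have hf0ne : f 0 ≠ 0 := ne_of_gt hf0pos
  have hg0ne : g 0 ≠ 0 := ne_of_gt hg0pos
  set Elin : (ℝ × ℝ) ≃ₗ[ℝ] (ℝ × ℝ) :=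
    { toFun := fun p => ((f 0) * p.1 + (f 0) * (B 0 / A 0) * p.2, (g 0) * p.2)
      invFun := fun q => (q.1 / (f 0) - (B 0 / A 0) * q.2 / (g 0), q.2 / (g 0))
      map_add' := fun p q => by simp [Prod.ext_iff]; constructor <;> ring
      map_smul' := fun c p => by simp [Prod.ext_iff, smul_eq_mul]; constructor <;> ring
      left_inv := fun p => by
        simp only [Prod.ext_iff]
        constructor
        · field_simp; ring
        · field_simp
      right_inv := fun q => by
        simp only [Prod.ext_iff]
        constructor
        · field_simp; ring
        · field_simp } with hElin
  set E : (ℝ × ℝ) ≃L[ℝ] (ℝ × ℝ) := Elin.toContinuousLinearEquiv with hE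
  have hΦat : ContDiffAt ℝ 1 Φ 0 := hΦc.contDiffAt (hWo.mem_nhds hW0)
  have hΦder : HasFDerivAt Φ (E : (ℝ × ℝ) →L[ℝ] (ℝ × ℝ)) 0 := by
    have hAd : DifferentiableAt ℝ A 0 := hA.differentiableAt one_ne_zero
    have hBd : DifferentiableAt ℝ B 0 := hB.differentiableAt one_ne_zero
    have hfd : DifferentiableAt ℝ f 0 :=
      ((contDiffAt_const.mul hA).sqrt (ne_of_gt hαA)).differentiableAt one_ne_zero
    have hgd : DifferentiableAt ℝ g 0 := by
      have : ContDiffAt ℝ 1 D 0 :=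
        ((hA.mul hC).sub (hB.pow 2)).div hA hA0
      exact ((contDiffAt_const.mul this).sqrt (ne_of_gt hβD)).differentiableAt one_ne_zero
    have hqd : DifferentiableAt ℝ (fun p : ℝ×ℝ => B p / A p) 0 :=
      (hB.div hA hA0).differentiableAt one_ne_zero
    have hw : HasFDerivAt (fun p : ℝ×ℝ => p.1 + B p / A p * p.2)
        (ContinuousLinearMap.fst ℝ ℝ ℝ +
          ((B 0 / A 0) • ContinuousLinearMap.snd ℝ ℝ ℝ +
            (0:ℝ×ℝ).2 • fderiv ℝ (fun p : ℝ×ℝ => B p / A p) 0)) 0 := by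
      exact (hasFDerivAt_fst).add (hqd.hasFDerivAt.mul (hasFDerivAt_snd))
    have h1 := hfd.hasFDerivAt.mul hw
    have h2 := hgd.hasFDerivAt.mul (hasFDerivAt_snd : HasFDerivAt Prod.snd (ContinuousLinearMap.snd ℝ ℝ ℝ) (0:ℝ×ℝ))
    have h3 := h1.prodMk h2
    refine h3.congr_fderiv ?_
    apply ContinuousLinearMap.ext
    intro v
    simp only [hE]
    have hw0 : (0:ℝ×ℝ).1 + B 0 / A 0 * (0:ℝ×ℝ).2 = 0 := by simp
    simp [Elin, hw0, ContinuousLinearMap.smul_apply, smul_eq_mul, Prod.ext_iff,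
      LinearEquiv.coe_toContinuousLinearEquiv']
    first
      | (constructor <;> ring)
      | ring
  -- inverse function theorem
  set P : OpenPartialHomeomorph (ℝ × ℝ) (ℝ × ℝ) := hΦat.toOpenPartialHomeomorph Φ hΦder one_ne_zero with hP
  have hPcoe : (P : (ℝ×ℝ) → (ℝ×ℝ)) = Φ := rfl
  have hsrc : (0:ℝ×ℝ) ∈ P.source := hΦat.mem_toOpenPartialHomeomorph_source hΦder one_ne_zero
  have hΨat : ContDiffAt ℝ 1 (P.symm : (ℝ×ℝ) → (ℝ×ℝ)) 0 := by
    have h := hΦat.to_localInverse hΦder one_ne_zero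
    rw [hΦ0] at h
    exact h
  obtain ⟨T₀, hT₀, hTon⟩ := hΨat.contDiffOn le_rfl (by simp)
  set T : Set (ℝ×ℝ) := interior T₀ with hT
  have hTo : IsOpen T := isOpen_interior
  have hT0 : (0:ℝ×ℝ) ∈ T := mem_interior_iff_mem_nhds.2 hT₀
  have hTΨ : ContDiffOn ℝ 1 (P.symm : (ℝ×ℝ) → (ℝ×ℝ)) T := hTon.mono interior_subset
  -- the sets U and V
  set U : Set (ℝ×ℝ) := W ∩ (P.source ∩ P ⁻¹' T) with hU
  set V : Set (ℝ×ℝ) := (P.target ∩ P.symm ⁻¹' U) ∩ T with hV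
  have hUo : IsOpen U := hWo.inter (P.isOpen_inter_preimage hTo)
  have hVo : IsOpen V := (P.isOpen_inter_preimage_symm hUo).inter hTo
  have hU0 : (0:ℝ×ℝ) ∈ U := by
    refine ⟨hW0, hsrc, ?_⟩
    simp only [mem_preimage, hPcoe, hΦ0]
    exact hT0
  have hV0 : (0:ℝ×ℝ) ∈ V := by
    have h0t : (0:ℝ×ℝ) ∈ P.target := by
      have := P.map_source hsrc
      rwa [hPcoe, hΦ0] at this
    refine ⟨⟨h0t, ?_⟩, hT0⟩
    simp only [mem_preimage]
    have : P.symm (0:ℝ×ℝ) = 0 := by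
      have := P.left_inv hsrc
      rw [hPcoe, hΦ0] at this
      exact this
    rw [this]
    exact hU0
  have hUsub : U ⊆ P.source := fun p hp => hp.2.1
  have hbij : Set.BijOn Φ U V := by
    constructor
    · intro p hp
      refine ⟨⟨?_, ?_⟩, ?_⟩
      · rw [← hPcoe]; exact P.map_source hp.2.1
      · simp only [mem_preimage]
        rw [← hPcoe, P.left_inv hp.2.1]
        exact hp
      · have := hp.2.2
        simpa [hPcoe] using this
    constructor
    · exact (P.injOn.mono hUsub).congr (fun p hp => rfl)
    · intro q hq
      refine ⟨P.symm q, hq.1.2, ?_⟩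
      rw [← hPcoe]
      exact P.right_inv hq.1.1
  refine ⟨U, V, hUo, hVo, hU0, hV0, Φ, (P.symm : (ℝ×ℝ) → (ℝ×ℝ)), ?_, hbij,
    hΦc.mono (fun p hp => hp.1), hTΨ.mono (fun q hq => hq.2), ?_, ?_,
    α, β, hα1, hβ1, fun p hp => hkey p hp.1⟩
  · rw [show ((0,0) : ℝ×ℝ) = 0 from rfl, hΦ0]
  · intro p hp
    rw [← hPcoe]
    exact P.left_inv (hUsub hp)
  · intro q hq
    rw [← hPcoe]
    exact P.right_inv hq.1.1

lemma morse_compL {C : ℝ × ℝ → ℝ} (L : (ℝ × ℝ) ≃L[ℝ] (ℝ × ℝ))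
    (hC : ContDiffAt ℝ 1 C 0) (hL0 : (L : (ℝ×ℝ) → (ℝ×ℝ)) 0 = 0) :
    ContDiffAt ℝ 1 (fun p => C (L p)) 0 := by
  have h : ContDiffAt ℝ 1 C ((L : (ℝ×ℝ) → (ℝ×ℝ)) 0) := by rw [hL0]; exact hC
  exact h.comp 0 (L.contDiff.contDiffAt)

lemma morse_clm1_expand (L : ℝ × ℝ →L[ℝ] ℝ) (p : ℝ × ℝ) :
    L p = p.1 * L (1, 0) + p.2 * L (0, 1) := by
  have hp' : p = p.1 • ((1:ℝ), (0:ℝ)) + p.2 • ((0:ℝ), (1:ℝ)) := by simp [Prod.ext_iff]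
  conv_lhs => rw [hp']
  simp only [_root_.map_add, _root_.map_smul, smul_eq_mul]

lemma morse_pdx {G : ℝ → ℝ → ℝ} {x y : ℝ}
    (hd : DifferentiableAt ℝ (fun p : ℝ × ℝ => G p.1 p.2) (x, y)) :
    pdx G x y = fderiv ℝ (fun p : ℝ × ℝ => G p.1 p.2) (x, y) (1, 0) := by
  have hline : HasDerivAt (fun t : ℝ => ((t, y) : ℝ × ℝ)) ((1:ℝ), (0:ℝ)) x :=
    (hasDerivAt_id x).prodMk (hasDerivAt_const x y)
  have h := hd.hasFDerivAt.comp_hasDerivAt x hline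
  exact h.deriv

lemma morse_pdy {G : ℝ → ℝ → ℝ} {x y : ℝ}
    (hd : DifferentiableAt ℝ (fun p : ℝ × ℝ => G p.1 p.2) (x, y)) :
    pdy G x y = fderiv ℝ (fun p : ℝ × ℝ => G p.1 p.2) (x, y) (0, 1) := by
  have hline : HasDerivAt (fun t : ℝ => ((x, t) : ℝ × ℝ)) ((0:ℝ), (1:ℝ)) y :=
    (hasDerivAt_const y x).prodMk (hasDerivAt_id y)
  have h := hd.hasFDerivAt.comp_hasDerivAt y hline
  exact h.deriv

lemma morse_deriv_x {F : ℝ × ℝ → ℝ}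
    (hd2 : DifferentiableAt ℝ (fderiv ℝ F) 0) (w : ℝ × ℝ) :
    deriv (fun t : ℝ => fderiv ℝ F (t, 0) w) 0 = fderiv ℝ (fderiv ℝ F) 0 (1, 0) w := by
  have hline : HasDerivAt (fun t : ℝ => ((t, 0) : ℝ × ℝ)) ((1:ℝ), (0:ℝ)) 0 :=
    (hasDerivAt_id 0).prodMk (hasDerivAt_const 0 0)
  have hd2' : HasFDerivAt (fderiv ℝ F) (fderiv ℝ (fderiv ℝ F) 0) ((0:ℝ), (0:ℝ)) :=
    hd2.hasFDerivAt
  have h2 := HasFDerivAt.comp_hasDerivAt (f := fun t : ℝ => ((t, (0:ℝ)) : ℝ × ℝ)) 0 hd2' hline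
  have h3 : HasDerivAt (fun t : ℝ => fderiv ℝ F (t, 0) w)
      (fderiv ℝ (fderiv ℝ F) 0 (1, 0) w) 0 := by
    simpa using h2.clm_apply (hasDerivAt_const 0 w)
  exact h3.deriv

lemma morse_deriv_y {F : ℝ × ℝ → ℝ}
    (hd2 : DifferentiableAt ℝ (fderiv ℝ F) 0) (w : ℝ × ℝ) :
    deriv (fun t : ℝ => fderiv ℝ F (0, t) w) 0 = fderiv ℝ (fderiv ℝ F) 0 (0, 1) w := by
  have hline : HasDerivAt (fun t : ℝ => ((0, t) : ℝ × ℝ)) ((0:ℝ), (1:ℝ)) 0 :=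
    (hasDerivAt_const 0 0).prodMk (hasDerivAt_id 0)
  have hd2' : HasFDerivAt (fderiv ℝ F) (fderiv ℝ (fderiv ℝ F) 0) ((0:ℝ), (0:ℝ)) :=
    hd2.hasFDerivAt
  have h2 := HasFDerivAt.comp_hasDerivAt (f := fun t : ℝ => (((0:ℝ), t) : ℝ × ℝ)) 0 hd2' hline
  have h3 : HasDerivAt (fun t : ℝ => fderiv ℝ F (0, t) w)
      (fderiv ℝ (fderiv ℝ F) 0 (0, 1) w) 0 := by
    simpa using h2.clm_apply (hasDerivAt_const 0 w)
  exact h3.deriv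

/-- Simplified Morse lemma: if `G` is three-times continuously differentiable near the
origin, vanishes to first order there, and has nondegenerate Hessian, then after a
continuously differentiable change of coordinates `(x, y) ↦ (u, v)` fixing the origin,
`G` takes the form `±u² ± v²`. -/
theorem morse_lemma
    (G : ℝ → ℝ → ℝ)
    (hG : ContDiffAt ℝ 3 (fun p : ℝ × ℝ => G p.1 p.2) (0, 0))
    (h0 : G 0 0 = 0)
    (hGx : pdx G 0 0 = 0)
    (hGy : pdy G 0 0 = 0)
    (hHess : pdx (pdx G) 0 0 * pdy (pdy G) 0 0 - (pdy (pdx G) 0 0) ^ 2 ≠ 0) :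
    ∃ U V : Set (ℝ × ℝ), IsOpen U ∧ IsOpen V ∧ (0, 0) ∈ U ∧ (0, 0) ∈ V ∧
      ∃ Φ Ψ : ℝ × ℝ → ℝ × ℝ,
        Φ (0, 0) = (0, 0) ∧
        Set.BijOn Φ U V ∧
        ContDiffOn ℝ 1 Φ U ∧
        ContDiffOn ℝ 1 Ψ V ∧
        (∀ p ∈ U, Ψ (Φ p) = p) ∧
        (∀ q ∈ V, Φ (Ψ q) = q) ∧
        ∃ ε₁ ε₂ : ℝ, (ε₁ = 1 ∨ ε₁ = -1) ∧ (ε₂ = 1 ∨ ε₂ = -1) ∧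
          ∀ p ∈ U, G p.1 p.2 = ε₁ * (Φ p).1 ^ 2 + ε₂ * (Φ p).2 ^ 2 := by
  classical
  set F : ℝ × ℝ → ℝ := fun p => G p.1 p.2 with hFdef
  obtain ⟨s, hs, hFon⟩ := hG.contDiffOn le_rfl (by simp)
  obtain ⟨r, hr0, hrsub⟩ := Metric.mem_nhds_iff.1 hs
  have h0ball : (0:ℝ×ℝ) ∈ ball (0:ℝ×ℝ) r := mem_ball_self hr0
  have hFball : ContDiffOn ℝ 3 F (ball 0 r) := hFon.mono hrsub
  have hdiffat : ∀ p ∈ ball (0:ℝ×ℝ) r, DifferentiableAt ℝ F p := fun p hp =>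
    (hFball.differentiableOn (by norm_num)).differentiableAt (isOpen_ball.mem_nhds hp)
  have hF0 : F 0 = 0 := h0
  -- first derivative vanishes
  have hdF : fderiv ℝ F 0 = 0 := by
    have hx : fderiv ℝ F (0, 0) (1, 0) = 0 := by
      rw [← morse_pdx (hdiffat 0 h0ball)]; exact hGx
    have hy : fderiv ℝ F (0, 0) (0, 1) = 0 := by
      rw [← morse_pdy (hdiffat 0 h0ball)]; exact hGy
    apply ContinuousLinearMap.ext
    intro v
    rw [morse_clm1_expand]
    show v.1 * fderiv ℝ F (0,0) (1,0) + v.2 * fderiv ℝ F (0,0) (0,1) = 0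
    rw [hx, hy]; ring
  -- second derivative data
  have hF1 : ContDiffOn ℝ 2 (fderiv ℝ F) (ball 0 r) :=
    hFball.fderiv_of_isOpen isOpen_ball (by norm_num)
  have hd2 : DifferentiableAt ℝ (fderiv ℝ F) 0 :=
    (hF1.differentiableOn (by norm_num)).differentiableAt (isOpen_ball.mem_nhds h0ball)
  have hevx : ∀ᶠ t in 𝓝 (0:ℝ), ((t, (0:ℝ)) : ℝ × ℝ) ∈ ball (0:ℝ×ℝ) r := by
    have hc : Continuous (fun t : ℝ => ((t, (0:ℝ)) : ℝ × ℝ)) := by fun_prop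
    exact (hc.tendsto' 0 0 rfl).eventually (isOpen_ball.eventually_mem h0ball)
  have hevy : ∀ᶠ t in 𝓝 (0:ℝ), (((0:ℝ), t) : ℝ × ℝ) ∈ ball (0:ℝ×ℝ) r := by
    have hc : Continuous (fun t : ℝ => (((0:ℝ), t) : ℝ × ℝ)) := by fun_prop
    exact (hc.tendsto' 0 0 rfl).eventually (isOpen_ball.eventually_mem h0ball)
  have haa : pdx (pdx G) 0 0 = fderiv ℝ (fderiv ℝ F) 0 (1, 0) (1, 0) := by
    have hev : (fun t => pdx G t 0) =ᶠ[𝓝 (0:ℝ)] (fun t => fderiv ℝ F (t, 0) (1, 0)) := by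
      filter_upwards [hevx] with t ht
      exact morse_pdx (hdiffat _ ht)
    have : pdx (pdx G) 0 0 = deriv (fun t => fderiv ℝ F (t, 0) (1, 0)) 0 := hev.deriv_eq
    rw [this, morse_deriv_x hd2]
  have hbb : pdy (pdx G) 0 0 = fderiv ℝ (fderiv ℝ F) 0 (0, 1) (1, 0) := by
    have hev : (fun t => pdx G 0 t) =ᶠ[𝓝 (0:ℝ)] (fun t => fderiv ℝ F (0, t) (1, 0)) := by
      filter_upwards [hevy] with t ht
      exact morse_pdx (hdiffat _ ht)
    have : pdy (pdx G) 0 0 = deriv (fun t => fderiv ℝ F (0, t) (1, 0)) 0 := hev.deriv_eq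
    rw [this, morse_deriv_y hd2]
  have hcc : pdy (pdy G) 0 0 = fderiv ℝ (fderiv ℝ F) 0 (0, 1) (0, 1) := by
    have hev : (fun t => pdy G 0 t) =ᶠ[𝓝 (0:ℝ)] (fun t => fderiv ℝ F (0, t) (0, 1)) := by
      filter_upwards [hevy] with t ht
      exact morse_pdy (hdiffat _ ht)
    have : pdy (pdy G) 0 0 = deriv (fun t => fderiv ℝ F (0, t) (0, 1)) 0 := hev.deriv_eq
    rw [this, morse_deriv_y hd2]
  have hsym0 : fderiv ℝ (fderiv ℝ F) 0 (0, 1) (1, 0)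
      = fderiv ℝ (fderiv ℝ F) 0 (1, 0) (0, 1) :=
    (hG.isSymmSndFDerivAt (by norm_num)) _ _
  -- quadratic representation
  obtain ⟨A, B, C, hAon, hBon, hCon, hrepball, hA0v, hB0v, hC0v⟩ :=
    morse_rep hFball hF0 hdF
  have hAat : ContDiffAt ℝ 1 A 0 := hAon.contDiffAt (isOpen_ball.mem_nhds h0ball)
  have hBat : ContDiffAt ℝ 1 B 0 := hBon.contDiffAt (isOpen_ball.mem_nhds h0ball)
  have hCat : ContDiffAt ℝ 1 C 0 := hCon.contDiffAt (isOpen_ball.mem_nhds h0ball)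
  have hrepev : ∀ᶠ p in 𝓝 (0:ℝ×ℝ),
      F p = p.1 ^ 2 * A p + 2 * (p.1 * p.2) * B p + p.2 ^ 2 * C p := by
    filter_upwards [isOpen_ball.mem_nhds h0ball] with p hp
    exact hrepball p hp
  have hA0' : A 0 = pdx (pdx G) 0 0 / 2 := by rw [hA0v, haa]
  have hB0' : B 0 = pdy (pdx G) 0 0 / 2 := by rw [hB0v, hbb, hsym0]
  have hC0' : C 0 = pdy (pdy G) 0 0 / 2 := by rw [hC0v, hcc]
  have hdet : A 0 * C 0 - B 0 ^ 2 ≠ 0 := by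
    rw [hA0', hB0', hC0']
    intro h
    apply hHess
    field_simp at h
    linarith
  have hMC : MC F := by
    by_cases hA0 : A 0 ≠ 0
    · exact morse_core hAat hBat hCat hA0 hdet hrepev
    · push_neg at hA0
      by_cases hC0 : C 0 ≠ 0
      · set L := (ContinuousLinearEquiv.prodComm ℝ ℝ ℝ) with hL
        apply morse_transport L
        have hL0 : (L : (ℝ×ℝ) → (ℝ×ℝ)) 0 = 0 := rfl
        apply morse_core (A := fun p => C (L p)) (B := fun p => B (L p))
          (C := fun p => A (L p))
        · exact morse_compL L hCat hL0
        · exact morse_compL L hBat hL0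
        · exact morse_compL L hAat hL0
        · exact hC0
        · show C 0 * A 0 - B 0 ^ 2 ≠ 0
          intro h; apply hdet; linarith
        · have htends : Tendsto (L : (ℝ×ℝ) → (ℝ×ℝ)) (𝓝 0) (𝓝 0) :=
            L.continuous.tendsto' 0 0 hL0
          filter_upwards [htends.eventually hrepev] with p hp
          show F (L p) = _
          rw [hp]
          show ((p.2, p.1) : ℝ×ℝ).1 ^ 2 * A (p.2, p.1)
              + 2 * (((p.2, p.1) : ℝ×ℝ).1 * ((p.2, p.1) : ℝ×ℝ).2) * B (p.2, p.1)
              + ((p.2, p.1) : ℝ×ℝ).2 ^ 2 * C (p.2, p.1) = _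
          ring_nf
          rfl
      · push_neg at hC0
        have hB0 : B 0 ≠ 0 := by
          intro h; apply hdet; rw [hA0, hC0, h]; ring
        apply morse_transport morse_shear
        have hL0 : (morse_shear : (ℝ×ℝ) → (ℝ×ℝ)) 0 = 0 := by
          simp [Prod.ext_iff]
        apply morse_core
          (A := fun p => A (morse_shear p) + 2 * B (morse_shear p) + C (morse_shear p))
          (B := fun p => B (morse_shear p) + C (morse_shear p))
          (C := fun p => C (morse_shear p))
        · exact ((morse_compL morse_shear hAat hL0).add
            (contDiffAt_const.mul (morse_compL morse_shear hBat hL0))).add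
            (morse_compL morse_shear hCat hL0)
        · exact (morse_compL morse_shear hBat hL0).add
            (morse_compL morse_shear hCat hL0)
        · exact morse_compL morse_shear hCat hL0
        · show A (morse_shear 0) + 2 * B (morse_shear 0) + C (morse_shear 0) ≠ 0
          rw [hL0, hA0, hC0]
          simpa using hB0
        · show (A (morse_shear 0) + 2 * B (morse_shear 0) + C (morse_shear 0))
              * C (morse_shear 0) - (B (morse_shear 0) + C (morse_shear 0)) ^ 2 ≠ 0
          rw [hL0, hA0, hC0]
          intro h
          apply hB0
          nlinarith [sq_nonneg (B 0)]
        · have htends : Tendsto (morse_shear : (ℝ×ℝ) → (ℝ×ℝ)) (𝓝 0) (𝓝 0) :=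
            morse_shear.continuous.tendsto' 0 0 hL0
          filter_upwards [htends.eventually hrepev] with p hp
          show F (morse_shear p) = _
          rw [hp]
          show ((p.1, p.1 + p.2) : ℝ×ℝ).1 ^ 2 * A (p.1, p.1 + p.2)
              + 2 * (((p.1, p.1 + p.2) : ℝ×ℝ).1 * ((p.1, p.1 + p.2) : ℝ×ℝ).2)
                * B (p.1, p.1 + p.2)
              + ((p.1, p.1 + p.2) : ℝ×ℝ).2 ^ 2 * C (p.1, p.1 + p.2) = _
          simp only [morse_shear_apply]
          ring
  exact hMC
end

section
/- Let g : ℝ → ℝ be three-times continuously differentiable near 0 with g(0) = 0, g'(0) = 0, and g''(0) ≠ 0, and let σ = sgn(g''(0)). Then there exist δ > 0 and a continuously differentiable function U : (-δ, δ) → ℝ with U(0) = 0 and U'(0) ≠ 0 such that U is injective on (-δ, δ), its inverse is continuously differentiable, and σ·g(x) = U(x)² for all |x| < δ. -/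
open Set Metric MeasureTheory Filter Topology

open Set Metric MeasureTheory Filter Topology

/-- Quadratic factorization of a `C³` function vanishing to first order at `0`. -/
lemma morse_factorization
    (g : ℝ → ℝ) (hg : ContDiffAt ℝ 3 g 0) (h0 : g 0 = 0) (h1 : deriv g 0 = 0) :
    ∃ ρ > 0, ∃ h : ℝ → ℝ,
      ContDiffOn ℝ 1 h (Set.Ioo (-ρ) ρ) ∧
      h 0 = deriv (deriv g) 0 / 2 ∧
      ∀ x ∈ Set.Ioo (-ρ) ρ, g x = x ^ 2 * h x := by
  obtain ⟨u, hu, hgu⟩ := hg.contDiffOn le_rfl (by simp)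
  obtain ⟨r, hr, hru⟩ := Metric.mem_nhds_iff.1 hu
  have hball : Metric.ball (0:ℝ) r = Set.Ioo (-r) r := by
    rw [Real.ball_eq_Ioo]; ring_nf
  set s : Set ℝ := Set.Ioo (-r) r with hs
  have hso : IsOpen s := isOpen_Ioo
  have hg3 : ContDiffOn ℝ 3 g s := hgu.mono (hball ▸ hru)
  set f : ℝ → ℝ := deriv (deriv g) with hf
  have hg2 : ContDiffOn ℝ 2 (deriv g) s :=
    hg3.deriv_of_isOpen hso (by norm_num)
  have hf1 : ContDiffOn ℝ 1 f s := hg2.deriv_of_isOpen hso (by norm_num)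
  have hfc : ContinuousOn f s := hf1.continuousOn
  have hf'c : ContinuousOn (deriv f) s := hf1.continuousOn_deriv_of_isOpen hso le_rfl
  have hfd : ∀ x ∈ s, HasDerivAt f (deriv f x) x := fun x hx =>
    (((hf1.differentiableOn one_ne_zero).differentiableAt (hso.mem_nhds hx))).hasDerivAt
  set ρ : ℝ := r / 2 with hρ
  have hρ0 : 0 < ρ := by positivity
  have hρr : ρ < r := by simp only [hρ]; linarith
  have hIccs : Set.Icc (-ρ) ρ ⊆ s := by
    intro y hy
    simp only [Set.mem_Icc] at hy
    exact ⟨by linarith [hy.1], by linarith [hy.2]⟩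
  set proj : ℝ → ℝ := fun y => max (-ρ) (min ρ y) with hproj
  have hproj_mem : ∀ y, proj y ∈ Set.Icc (-ρ) ρ := fun y =>
    ⟨le_max_left _ _, max_le (by linarith) (min_le_left _ _)⟩
  have hproj_s : ∀ y, proj y ∈ s := fun y => hIccs (hproj_mem y)
  have hproj_eq : ∀ y : ℝ, |y| ≤ ρ → proj y = y := by
    intro y hy
    rw [abs_le] at hy
    simp [hproj, min_eq_right hy.2, max_eq_right hy.1]
  have hproj_cont : Continuous proj := continuous_const.max (continuous_const.min continuous_id)
  set F : ℝ → ℝ := fun y => f (proj y) with hF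
  set F' : ℝ → ℝ := fun y => deriv f (proj y) with hF'
  have hFc : Continuous F := hfc.comp_continuous hproj_cont hproj_s
  have hF'c : Continuous F' := hf'c.comp_continuous hproj_cont hproj_s
  have hFeq : ∀ y : ℝ, |y| ≤ ρ → F y = f y := fun y hy => by
    simp only [hF, hproj_eq y hy]
  have hF'eq : ∀ y : ℝ, |y| ≤ ρ → F' y = deriv f y := fun y hy => by
    simp only [hF', hproj_eq y hy]
  have hFd : ∀ y : ℝ, |y| < ρ → HasDerivAt F (F' y) y := by
    intro y hy
    have hys : y ∈ s := hIccs (Set.mem_Icc.2 (abs_le.1 hy.le))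
    have hev : f =ᶠ[nhds y] F := by
      have hmem : Set.Ioo (-ρ) ρ ∈ nhds y := isOpen_Ioo.mem_nhds (abs_lt.1 hy |> fun h => ⟨h.1, h.2⟩)
      filter_upwards [hmem] with z hz
      exact (hFeq z (le_of_lt (abs_lt.2 ⟨hz.1, hz.2⟩))).symm
    have := (hfd y hys).congr_of_eventuallyEq hev.symm
    rwa [hF'eq y hy.le]
  set h : ℝ → ℝ := fun x => ∫ t in (0:ℝ)..1, (1 - t) * F (t * x) with hh
  set H : ℝ → ℝ := fun x => ∫ t in (0:ℝ)..1, ((1 - t) * t) * F' (t * x) with hH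
  have hHc : Continuous H := by
    apply intervalIntegral.continuous_parametric_intervalIntegral_of_continuous'
    exact ((continuous_const.sub continuous_snd).mul continuous_snd).mul
      (hF'c.comp (continuous_snd.mul continuous_fst))
  obtain ⟨M, hM⟩ := (isCompact_Icc (a := -ρ) (b := ρ)).exists_bound_of_continuousOn
    (hf'c.mono hIccs)
  have hMb : ∀ y, ‖F' y‖ ≤ M := fun y => hM _ (hproj_mem y)
  have hhd : ∀ x : ℝ, |x| < ρ → HasDerivAt h (H x) x := by
    intro x₀ hx₀
    have hε : (0:ℝ) < ρ - |x₀| := by linarith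
    have key := intervalIntegral.hasDerivAt_integral_of_dominated_loc_of_deriv_le
      (F := fun x t => (1 - t) * F (t * x)) (F' := fun x t => ((1 - t) * t) * F' (t * x))
      (x₀ := x₀) (a := (0:ℝ)) (b := 1) (μ := volume) (bound := fun _ => M) (Metric.ball_mem_nhds x₀ hε)
      ?meas ?int ?meas' ?bound ?bint ?diff
    · exact key.2
    case meas =>
      filter_upwards with x
      exact (((continuous_const.sub continuous_id).mul
        (hFc.comp (continuous_id.mul continuous_const)))).aestronglyMeasurable
    case int =>
      exact (((continuous_const.sub continuous_id).mul
        (hFc.comp (continuous_id.mul continuous_const)))).intervalIntegrable _ _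
    case meas' =>
      exact ((((continuous_const.sub continuous_id).mul continuous_id).mul
        (hF'c.comp (continuous_id.mul continuous_const)))).aestronglyMeasurable
    case bound =>
      filter_upwards with t ht x hx
      have ht' : t ∈ Set.Ioc (0:ℝ) 1 := by rwa [Set.uIoc_of_le (by norm_num : (0:ℝ) ≤ 1)] at ht
      have h1 : |(1 - t) * t| ≤ 1 := by
        rw [abs_mul, abs_of_nonneg (by linarith [ht'.2] : (0:ℝ) ≤ 1 - t),
          abs_of_nonneg ht'.1.le]
        nlinarith [ht'.1, ht'.2]
      calc ‖(1 - t) * t * F' (t * x)‖ = |(1 - t) * t| * ‖F' (t * x)‖ := by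
            rw [norm_mul]; rfl
        _ ≤ 1 * M := mul_le_mul h1 (hMb _) (norm_nonneg _) zero_le_one
        _ = M := one_mul M
    case bint => exact intervalIntegrable_const
    case diff =>
      filter_upwards with t ht x hx
      have ht' : t ∈ Set.Ioc (0:ℝ) 1 := by rwa [Set.uIoc_of_le (by norm_num : (0:ℝ) ≤ 1)] at ht
      have hx' : |x| < ρ := by
        have hnb := mem_ball_iff_norm.1 hx
        rw [Real.norm_eq_abs] at hnb
        have h2 := abs_sub_abs_le_abs_sub x x₀
        linarith
      have htx : |t * x| < ρ := by
        calc |t * x| = |t| * |x| := abs_mul t x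
          _ ≤ 1 * |x| := mul_le_mul_of_nonneg_right
              (by rw [abs_of_nonneg ht'.1.le]; exact ht'.2) (abs_nonneg x)
          _ < ρ := by rwa [one_mul]
      have hFdz := hFd (t * x) htx
      have hinner : HasDerivAt (fun y : ℝ => t * y) t x := by
        simpa using (hasDerivAt_id x).const_mul t
      have hcomp : HasDerivAt (fun y : ℝ => F (t * y)) (F' (t * x) * t) x :=
        HasDerivAt.comp x hFdz hinner
      have := hcomp.const_mul (1 - t)
      convert this using 1
      rfl
      ring
  have hIooρ : IsOpen (Set.Ioo (-ρ) ρ) := isOpen_Ioo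
  have hmemρ : ∀ x ∈ Set.Ioo (-ρ) ρ, |x| < ρ := fun x hx => abs_lt.2 ⟨hx.1, hx.2⟩
  have hderiv_h : ∀ x ∈ Set.Ioo (-ρ) ρ, deriv h x = H x := fun x hx =>
    (hhd x (hmemρ x hx)).deriv
  have hh1 : ContDiffOn ℝ 1 h (Set.Ioo (-ρ) ρ) := by
    rw [show (1 : WithTop ℕ∞) = 0 + 1 by norm_num, contDiffOn_succ_iff_deriv_of_isOpen hIooρ]
    refine ⟨fun x hx => ((hhd x (hmemρ x hx)).differentiableAt).differentiableWithinAt, by simp, ?_⟩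
    rw [contDiffOn_zero]
    exact hHc.continuousOn.congr hderiv_h
  have hh0 : h 0 = f 0 / 2 := by
    have heq : ∀ t ∈ Set.uIcc (0:ℝ) 1, (1 - t) * F (t * 0) = (1 - t) * f 0 := by
      intro t _
      rw [mul_zero, hFeq 0 (by simpa using hρ0.le)]
    simp only [hh]
    rw [intervalIntegral.integral_congr heq, intervalIntegral.integral_mul_const]
    have hint : (∫ t in (0:ℝ)..1, (1 - t)) = 1 / 2 := by
      rw [intervalIntegral.integral_sub intervalIntegrable_const intervalIntegral.intervalIntegrable_id,
        intervalIntegral.integral_const, integral_id]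
      norm_num
    rw [hint]; ring
  have hfact : ∀ x : ℝ, |x| < ρ → g x = x ^ 2 * h x := by
    intro x hx
    have hxabs : ∀ u ∈ Set.uIcc 0 x, |u| ≤ |x| := by
      intro u hu
      rcases Set.mem_uIcc.1 hu with h' | h' <;> rw [abs_le] <;>
        constructor <;> linarith [le_abs_self x, neg_abs_le x, abs_nonneg x, h'.1, h'.2]
    have huIcc : Set.uIcc 0 x ⊆ s := fun u hu =>
      hIccs (Set.mem_Icc.2 (abs_le.1 ((hxabs u hu).trans hx.le)))
    have hgd : ∀ u ∈ Set.uIcc 0 x, HasDerivAt g (deriv g u) u := fun u hu =>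
      ((hg3.differentiableOn (by norm_num)).differentiableAt
        (hso.mem_nhds (huIcc hu))).hasDerivAt
    have hg'd : ∀ u ∈ Set.uIcc 0 x, HasDerivAt (deriv g) (f u) u := fun u hu =>
      ((hg2.differentiableOn (by norm_num)).differentiableAt
        (hso.mem_nhds (huIcc hu))).hasDerivAt
    have hg'int : IntervalIntegrable (deriv g) volume 0 x :=
      (hg2.continuousOn.mono huIcc).intervalIntegrable
    have hparts : (∫ u in (0:ℝ)..x, (x - u) * f u) = g x := by
      have hIoosub : Set.Ioo (min (0:ℝ) x) (max 0 x) ⊆ Set.uIcc 0 x := fun u hu =>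
        Set.Ioo_subset_Icc_self hu
      have hibp := intervalIntegral.integral_mul_deriv_eq_deriv_mul_of_hasDerivAt
        (a := (0:ℝ)) (b := x) (u := fun u => x - u) (v := deriv g)
        (u' := fun _ => (-1 : ℝ)) (v' := f)
        ((continuous_const.sub continuous_id).continuousOn)
        (hg2.continuousOn.mono huIcc)
        (fun u _ => by simpa using (HasDerivAt.const_sub x (hasDerivAt_id u)))
        (fun u hu => hg'd u (hIoosub hu))
        intervalIntegrable_const
        ((hfc.mono huIcc).intervalIntegrable)
      have hftc : (∫ u in (0:ℝ)..x, deriv g u) = g x - g 0 :=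
        intervalIntegral.integral_eq_sub_of_hasDerivAt hgd hg'int
      rw [hibp, intervalIntegral.integral_congr
        (g := fun u => -(deriv g u)) (fun u _ => by ring),
        intervalIntegral.integral_neg, hftc]
      simp [h0, h1]
    have hcomp := intervalIntegral.smul_integral_comp_mul_left
      (a := (0:ℝ)) (b := 1) (f := fun u => (x - u) * F u) x
    simp only [mul_zero, mul_one, smul_eq_mul] at hcomp
    have e1 : (∫ t in (0:ℝ)..1, (x - x * t) * F (x * t)) = x * h x := by
      rw [show (fun t => (x - x * t) * F (x * t))
          = (fun t => x * ((1 - t) * F (t * x))) from funext (fun t => by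
            rw [mul_comm x t]; ring), hh]
      exact intervalIntegral.integral_const_mul x _
    rw [e1] at hcomp
    have e2 : (∫ u in (0:ℝ)..x, (x - u) * F u) = ∫ u in (0:ℝ)..x, (x - u) * f u := by
      apply intervalIntegral.integral_congr
      intro u hu
      show (x - u) * F u = (x - u) * f u
      rw [hFeq u ((hxabs u hu).trans hx.le)]
    calc g x = ∫ u in (0:ℝ)..x, (x - u) * f u := hparts.symm
      _ = ∫ u in (0:ℝ)..x, (x - u) * F u := e2.symm
      _ = x * (x * h x) := hcomp.symm
      _ = x ^ 2 * h x := by ring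
  exact ⟨ρ, hρ0, h, hh1, by rw [hh0], fun x hx => hfact x (hmemρ x hx)⟩

/-- One-dimensional Morse-type lemma: if `g` is three-times continuously differentiable
near `0` with `g(0) = g'(0) = 0` and `g''(0) ≠ 0`, and `σ = sgn(g''(0))`, then there is
a continuously differentiable change of coordinate `U` near `0` (injective, with
continuously differentiable inverse, `U(0) = 0`, `U'(0) ≠ 0`) such that
`σ·g(x) = U(x)²` near `0`. -/
theorem one_dim_morse_lemma
    (g : ℝ → ℝ)
    (hg : ContDiffAt ℝ 3 g 0)
    (h0 : g 0 = 0)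
    (h1 : deriv g 0 = 0)
    (h2 : deriv (deriv g) 0 ≠ 0) :
    ∃ δ > 0, ∃ U : ℝ → ℝ,
      U 0 = 0 ∧
      deriv U 0 ≠ 0 ∧
      ContDiffOn ℝ 1 U (Set.Ioo (-δ) δ) ∧
      Set.InjOn U (Set.Ioo (-δ) δ) ∧
      (∃ W : ℝ → ℝ, ContDiffOn ℝ 1 W (U '' Set.Ioo (-δ) δ) ∧
        ∀ x ∈ Set.Ioo (-δ) δ, W (U x) = x) ∧
      ∀ x : ℝ, |x| < δ → Real.sign (deriv (deriv g) 0) * g x = (U x) ^ 2 := by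
  obtain ⟨ρ, hρ0, h, hh1, hh0, hfact⟩ := morse_factorization g hg h0 h1
  set σ : ℝ := Real.sign (deriv (deriv g) 0) with hσ
  set c : ℝ → ℝ := fun x => σ * h x with hc
  have hc0 : 0 < c 0 := by
    simp only [hc, hh0]
    rcases lt_or_gt_of_ne h2 with hneg | hpos
    · rw [hσ, Real.sign_of_neg hneg]; nlinarith
    · rw [hσ, Real.sign_of_pos hpos]; nlinarith
  -- find ρ₁ ≤ ρ on which c > 0
  have hccont : ContinuousAt c 0 :=
    (continuousAt_const.mul
      ((hh1.continuousOn.continuousAt (isOpen_Ioo.mem_nhds (by constructor <;> simp [hρ0, hρ0.le] <;> linarith)))))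
  have hev : ∀ᶠ x in 𝓝 (0:ℝ), 0 < c x := hccont.eventually (eventually_gt_nhds hc0)
  obtain ⟨ρ₁', hρ₁'pos, hρ₁'⟩ := Metric.eventually_nhds_iff_ball.1 hev
  set ρ₁ : ℝ := min ρ₁' ρ with hρ₁def
  have hρ₁0 : 0 < ρ₁ := lt_min hρ₁'pos hρ0
  have hρ₁le : ρ₁ ≤ ρ₁' := min_le_left _ _
  have hρ₁ρ : ρ₁ ≤ ρ := min_le_right _ _
  have hsub₁ : Set.Ioo (-ρ₁) ρ₁ ⊆ Set.Ioo (-ρ) ρ := fun y hy =>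
    ⟨by linarith [hy.1], by linarith [hy.2]⟩
  have hcpos : ∀ x ∈ Set.Ioo (-ρ₁) ρ₁, 0 < c x := by
    intro x hx
    apply hρ₁'
    rw [mem_ball_iff_norm, sub_zero, Real.norm_eq_abs, abs_lt]
    exact ⟨by linarith [hx.1, hρ₁le], by linarith [hx.2, hρ₁le]⟩
  -- define U
  set U : ℝ → ℝ := fun x => x * Real.sqrt (c x) with hU
  have hU0 : U 0 = 0 := by simp [hU]
  -- C¹ at points of Ioo (-ρ₁) ρ₁
  have hUcd : ∀ x ∈ Set.Ioo (-ρ₁) ρ₁, ContDiffAt ℝ 1 U x := by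
    intro x hx
    have hhx : ContDiffAt ℝ 1 h x :=
      hh1.contDiffAt (isOpen_Ioo.mem_nhds (hsub₁ hx))
    have hcx : ContDiffAt ℝ 1 c x := contDiffAt_const.mul hhx
    have hsq : ContDiffAt ℝ 1 Real.sqrt (c x) :=
      Real.contDiffAt_sqrt (ne_of_gt (hcpos x hx))
    exact contDiffAt_id.mul (hsq.comp x hcx)
  have h0mem : (0:ℝ) ∈ Set.Ioo (-ρ₁) ρ₁ := ⟨by linarith, hρ₁0⟩
  -- derivative at 0
  have hd0 : HasDerivAt U (Real.sqrt (c 0)) 0 := by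
    have hsqd : DifferentiableAt ℝ (fun x => Real.sqrt (c x)) 0 := by
      have hhx : ContDiffAt ℝ 1 h 0 :=
        hh1.contDiffAt (isOpen_Ioo.mem_nhds (hsub₁ h0mem))
      exact (((Real.contDiffAt_sqrt (ne_of_gt hc0)).comp 0
        (contDiffAt_const.mul hhx)).differentiableAt one_ne_zero)
    have := (hasDerivAt_id (0:ℝ)).mul hsqd.hasDerivAt
    exact (by simpa using this : HasDerivAt (id * fun x => Real.sqrt (c x)) (Real.sqrt (c 0)) 0)
  have hderivU0 : deriv U 0 = Real.sqrt (c 0) := hd0.deriv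
  have hderivU0pos : 0 < deriv U 0 := by
    rw [hderivU0]; exact Real.sqrt_pos.2 hc0
  -- U is C¹ on the open interval, so deriv U is continuous at 0
  have hUC1 : ContDiffOn ℝ 1 U (Set.Ioo (-ρ₁) ρ₁) := fun x hx =>
    (hUcd x hx).contDiffWithinAt
  have hdUcont : ContinuousAt (deriv U) 0 :=
    (hUC1.continuousOn_deriv_of_isOpen isOpen_Ioo le_rfl).continuousAt
      (isOpen_Ioo.mem_nhds h0mem)
  have hevd : ∀ᶠ x in 𝓝 (0:ℝ), 0 < deriv U x :=
    hdUcont.eventually (eventually_gt_nhds hderivU0pos)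
  obtain ⟨δ', hδ'pos, hδ'⟩ := Metric.eventually_nhds_iff_ball.1 hevd
  set δ : ℝ := min δ' ρ₁ with hδdef
  have hδ0 : 0 < δ := lt_min hδ'pos hρ₁0
  have hδle : δ ≤ δ' := min_le_left _ _
  have hδρ₁ : δ ≤ ρ₁ := min_le_right _ _
  have hsubδ : Set.Ioo (-δ) δ ⊆ Set.Ioo (-ρ₁) ρ₁ := fun y hy =>
    ⟨by linarith [hy.1], by linarith [hy.2]⟩
  have hdpos : ∀ x ∈ Set.Ioo (-δ) δ, 0 < deriv U x := by
    intro x hx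
    apply hδ'
    rw [mem_ball_iff_norm, sub_zero, Real.norm_eq_abs, abs_lt]
    exact ⟨by linarith [hx.1, hδle], by linarith [hx.2, hδle]⟩
  have hUC1δ : ContDiffOn ℝ 1 U (Set.Ioo (-δ) δ) := hUC1.mono hsubδ
  -- strict monotonicity / injectivity
  have hmono : StrictMonoOn U (Set.Ioo (-δ) δ) := by
    apply strictMonoOn_of_deriv_pos (convex_Ioo _ _) hUC1δ.continuousOn
    intro x hx
    rw [interior_Ioo] at hx
    exact hdpos x hx
  have hinj : Set.InjOn U (Set.Ioo (-δ) δ) := hmono.injOn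
  -- inverse
  set W : ℝ → ℝ := Function.invFunOn U (Set.Ioo (-δ) δ) with hW
  have hWleft : ∀ x ∈ Set.Ioo (-δ) δ, W (U x) = x := fun x hx =>
    hinj.leftInvOn_invFunOn hx
  have hWC1 : ContDiffOn ℝ 1 W (U '' Set.Ioo (-δ) δ) := by
    rintro y ⟨x, hx, rfl⟩
    have hUx : ContDiffAt ℝ 1 U x := hUcd x (hsubδ hx)
    have hne : deriv U x ≠ 0 := ne_of_gt (hdpos x hx)
    have hd : HasDerivAt U (deriv U x) x := (hUx.differentiableAt one_ne_zero).hasDerivAt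
    have hfd : HasFDerivAt U
        ((ContinuousLinearEquiv.unitsEquivAut ℝ (Units.mk0 _ hne) : ℝ ≃L[ℝ] ℝ) : ℝ →L[ℝ] ℝ) x :=
      hd.hasFDerivAt_equiv hne
    have hstrict : HasStrictFDerivAt U
        ((ContinuousLinearEquiv.unitsEquivAut ℝ (Units.mk0 _ hne) : ℝ ≃L[ℝ] ℝ) : ℝ →L[ℝ] ℝ) x :=
      hUx.hasStrictFDerivAt' hfd one_ne_zero
    set V : ℝ → ℝ := hUx.localInverse hfd one_ne_zero with hV
    have hVeq : V = hstrict.localInverse U _ x := rfl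
    have hVcd : ContDiffAt ℝ 1 V (U x) := hUx.to_localInverse hfd one_ne_zero
    have hVx : V (U x) = x := hUx.localInverse_apply_image hfd one_ne_zero
    have hright : ∀ᶠ y in 𝓝 (U x), U (V y) = y := by
      rw [hVeq]; exact hstrict.eventually_right_inverse
    have hVcont : ContinuousAt V (U x) := by
      rw [hVeq]; exact hstrict.localInverse_continuousAt
    have himg : U '' Set.Ioo (-δ) δ ∈ 𝓝 (U x) := by
      rw [← hstrict.map_nhds_eq_of_equiv]
      exact Filter.image_mem_map (isOpen_Ioo.mem_nhds hx)
    have hVin : ∀ᶠ y in 𝓝 (U x), V y ∈ Set.Ioo (-δ) δ := by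
      have : Set.Ioo (-δ) δ ∈ 𝓝 (V (U x)) := by
        rw [hVx]; exact isOpen_Ioo.mem_nhds hx
      exact hVcont this
    have hWV : W =ᶠ[𝓝 (U x)] V := by
      filter_upwards [himg, hright, hVin] with y hy1 hy2 hy3
      have hyex : ∃ a ∈ Set.Ioo (-δ) δ, U a = y := by
        obtain ⟨a, ha, rfl⟩ := hy1; exact ⟨a, ha, rfl⟩
      have hWmem : W y ∈ Set.Ioo (-δ) δ := Function.invFunOn_mem hyex
      have hWy : U (W y) = y := Function.invFunOn_eq hyex
      exact hinj hWmem hy3 (by rw [hWy, hy2])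
    exact (hVcd.congr_of_eventuallyEq hWV).contDiffWithinAt
  -- the key identity
  have hkey : ∀ x : ℝ, |x| < δ → σ * g x = (U x) ^ 2 := by
    intro x hx
    have hxδ : x ∈ Set.Ioo (-δ) δ := abs_lt.1 hx |> fun h => ⟨h.1, h.2⟩
    have hxρ : x ∈ Set.Ioo (-ρ) ρ := hsub₁ (hsubδ hxδ)
    have hcx : 0 < c x := hcpos x (hsubδ hxδ)
    have : σ * g x = x ^ 2 * c x := by
      rw [hfact x hxρ, hc]; ring
    rw [this, hU]
    rw [mul_pow, Real.sq_sqrt hcx.le]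
  exact ⟨δ, hδ0, U, hU0, ne_of_gt hderivU0pos, hUC1δ, hinj, ⟨W, hWC1, hWleft⟩, hkey⟩
end

section
/- Let f : ℝ → ℝ be four-times continuously differentiable, fix [a₀, b₀] with a₀ < b₀, and let c₀ ∈ (a₀, b₀) be a mean value abscissa for f on [a₀, b₀]. Suppose f''(c₀) = 0, f'(b₀) = f'(c₀), f''(b₀) ≠ 0, f'''(c₀) ≠ 0, and that f''(b₀) and f'''(c₀) have opposite signs (i.e. f''(b₀)·f'''(c₀) < 0). Then (b₀, c₀) is an isolated solution of the mean value relation: there exist δ > 0 and ε > 0 such that the only pair (b, c) with |b - b₀| < δ, |c - c₀| < ε, and (f(b) - f(a₀))/(b - a₀) = f'(c) is (b, c) = (b₀, c₀). In particular, there is no continuous function C defined on a neighborhood of b₀ with C(b₀) = c₀ satisfying (f(b) - f(a₀))/(b - a₀) = f'(C(b)) for all b in that neighborhood. -/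
open Set

lemma aux_pos (h : ℝ → ℝ) (hh : ContDiff ℝ 2 h) (x₀ : ℝ)
    (h1 : deriv h x₀ = 0) (h2 : 0 < iteratedDeriv 2 h x₀) :
    ∃ ε > 0, ∀ x, |x - x₀| < ε → x ≠ x₀ → h x₀ < h x := by
  have hdd : iteratedDeriv 2 h = deriv (deriv h) := by
    rw [iteratedDeriv_succ, iteratedDeriv_one]
  have hC1 : ContDiff ℝ 1 (deriv h) := by
    have h2' : ContDiff ℝ ((1:ℕ) + 1) h := by exact_mod_cast hh
    exact (contDiff_succ_iff_deriv.mp h2').2.2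
  have hcont2 : Continuous (deriv (deriv h)) := hC1.continuous_deriv le_rfl
  have hcont1 : Continuous (deriv h) := hC1.continuous
  have hdiff1 : Differentiable ℝ (deriv h) := hC1.differentiable one_ne_zero
  have hdiff0 : Differentiable ℝ h := hh.differentiable (by norm_num)
  rw [hdd] at h2
  have hev : ∀ᶠ x in nhds x₀, 0 < deriv (deriv h) x :=
    ContinuousAt.eventually_lt continuousAt_const hcont2.continuousAt h2
  obtain ⟨ε, hε, hball⟩ := Metric.eventually_nhds_iff.mp hev
  refine ⟨ε, hε, ?_⟩
  have hpos : ∀ x, |x - x₀| < ε → 0 < deriv (deriv h) x := by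
    intro x hx; exact hball (by rwa [Real.dist_eq])
  -- deriv h strictly monotone on Ioo (x₀ - ε) (x₀ + ε)
  have hIoo : ∀ x, |x - x₀| < ε ↔ x ∈ Ioo (x₀ - ε) (x₀ + ε) := by
    intro x; rw [mem_Ioo, abs_sub_lt_iff]; constructor <;> intro hx <;> constructor <;> linarith [hx.1, hx.2]
  have hmono : StrictMonoOn (deriv h) (Ioo (x₀ - ε) (x₀ + ε)) := by
    refine strictMonoOn_of_deriv_pos (convex_Ioo _ _) hcont1.continuousOn ?_
    intro x hx
    rw [interior_Ioo] at hx
    exact hpos x ((hIoo x).mpr hx)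
  intro x hx hne
  have hxI : x ∈ Ioo (x₀ - ε) (x₀ + ε) := (hIoo x).mp hx
  have hx₀I : x₀ ∈ Ioo (x₀ - ε) (x₀ + ε) := (hIoo x₀).mp (by simpa using hε)
  rcases hne.lt_or_gt with hlt | hlt
  · -- x < x₀ : h strictly anti on Icc x x₀
    have : StrictAntiOn h (Icc x x₀) := by
      refine strictAntiOn_of_deriv_neg (convex_Icc _ _) hdiff0.continuous.continuousOn ?_
      intro y hy
      rw [interior_Icc] at hy
      have hyI : y ∈ Ioo (x₀ - ε) (x₀ + ε) := ⟨by linarith [hy.1, hxI.1], by linarith [hy.2]⟩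
      have := hmono hyI hx₀I hy.2
      rwa [h1] at this
    have := this (left_mem_Icc.mpr hlt.le) (right_mem_Icc.mpr hlt.le) hlt
    linarith
  · have : StrictMonoOn h (Icc x₀ x) := by
      refine strictMonoOn_of_deriv_pos (convex_Icc _ _) hdiff0.continuous.continuousOn ?_
      intro y hy
      rw [interior_Icc] at hy
      have hyI : y ∈ Ioo (x₀ - ε) (x₀ + ε) := ⟨by linarith [hy.1], by linarith [hy.2, hxI.2]⟩
      have := hmono hx₀I hyI hy.1
      rwa [h1] at this
    exact this (left_mem_Icc.mpr hlt.le) (right_mem_Icc.mpr hlt.le) hlt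

lemma aux_sign (h : ℝ → ℝ) (hh : ContDiff ℝ 2 h) (x₀ : ℝ)
    (h1 : deriv h x₀ = 0) (h2 : iteratedDeriv 2 h x₀ ≠ 0) :
    ∃ ε > 0, ∀ x, |x - x₀| < ε → x ≠ x₀ → 0 < (h x - h x₀) * iteratedDeriv 2 h x₀ := by
  rcases h2.lt_or_gt with hK | hK
  · obtain ⟨ε, hε, H⟩ := aux_pos (fun x => -h x) hh.neg x₀ (by rw [deriv.fun_neg, h1, neg_zero]) (by rw [iteratedDeriv_fun_neg]; linarith)
    refine ⟨ε, hε, fun x hx hne => ?_⟩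
    have := H x hx hne
    exact mul_pos_of_neg_of_neg (by linarith) hK
  · obtain ⟨ε, hε, H⟩ := aux_pos h hh x₀ h1 hK
    exact ⟨ε, hε, fun x hx hne => mul_pos (by linarith [H x hx hne]) hK⟩

/-- Theorem (main II, opposite signs): if `f` is four-times continuously
differentiable, `c₀` is a mean value abscissa for `f` on `[a₀, b₀]` with
`f''(c₀) = 0`, `f'(b₀) = f'(c₀)`, `f''(b₀) ≠ 0`, `f'''(c₀) ≠ 0`, and `f''(b₀)` and
`f'''(c₀)` have opposite signs, then `(b₀, c₀)` is an isolated solution of the mean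
value relation; in particular no continuous local choice `c = C(b)` through `c₀`
exists. -/
theorem mean_value_abscissa_isolated_of_opposite_signs
    (f : ℝ → ℝ) (hf : ContDiff ℝ 4 f)
    (a₀ b₀ c₀ : ℝ) (hab : a₀ < b₀) (hc : c₀ ∈ Set.Ioo a₀ b₀)
    (hmv : (f b₀ - f a₀) / (b₀ - a₀) = deriv f c₀)
    (h2c : iteratedDeriv 2 f c₀ = 0)
    (h1b : deriv f b₀ = deriv f c₀)
    (h2b : iteratedDeriv 2 f b₀ ≠ 0)
    (h3c : iteratedDeriv 3 f c₀ ≠ 0)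
    (hsign : iteratedDeriv 2 f b₀ * iteratedDeriv 3 f c₀ < 0) :
    (∃ δ > 0, ∃ ε > 0, ∀ b c : ℝ, |b - b₀| < δ → |c - c₀| < ε →
      (f b - f a₀) / (b - a₀) = deriv f c → b = b₀ ∧ c = c₀) ∧
    ¬ ∃ δ > 0, ∃ C : ℝ → ℝ,
        ContinuousOn C (Set.Ioo (b₀ - δ) (b₀ + δ)) ∧
        C b₀ = c₀ ∧
        ∀ b : ℝ, |b - b₀| < δ → (f b - f a₀) / (b - a₀) = deriv f (C b) := by
  have hba₀ : (0:ℝ) < b₀ - a₀ := by linarith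
  have hdiff : Differentiable ℝ f := hf.differentiable (by norm_num)
  -- C² facts
  have hC3 : ContDiff ℝ 3 (deriv f) := by
    have h4 : ContDiff ℝ ((3:ℕ) + 1) f := by exact_mod_cast hf
    exact (contDiff_succ_iff_deriv.mp h4).2.2
  have hC2d : ContDiff ℝ 2 (deriv f) := hC3.of_le (by norm_num)
  -- c-side: sign lemma for deriv f at c₀
  have h2eq : iteratedDeriv 2 f = deriv (deriv f) := by
    rw [iteratedDeriv_succ, iteratedDeriv_one]
  have hd2 : deriv (deriv f) c₀ = 0 := by rw [← h2eq]; exact h2c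
  have hid2 : iteratedDeriv 2 (deriv f) c₀ = iteratedDeriv 3 f c₀ := by
    rw [← iteratedDeriv_succ']
  obtain ⟨ε, hε, Hc⟩ := aux_sign (deriv f) hC2d c₀ hd2 (by rw [hid2]; exact h3c)
  rw [hid2] at Hc
  -- b-side: ψ
  set L := deriv f c₀ with hL
  set ψ : ℝ → ℝ := fun b => f b - f a₀ - L * (b - a₀) with hψdef
  have hψC2 : ContDiff ℝ 2 ψ := by
    exact ((hf.of_le (by norm_num)).sub contDiff_const).sub
      (contDiff_const.mul ((contDiff_id).sub contDiff_const))
  have hψderiv : deriv ψ = fun b => deriv f b - L := by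
    funext b
    have hd : HasDerivAt ψ (deriv f b - L) b := by
      have h1 : HasDerivAt (fun b => f b - f a₀) (deriv f b) b :=
        ((hdiff b).hasDerivAt).sub_const _
      have h2 : HasDerivAt (fun b => L * (b - a₀)) L b := by
        simpa using ((hasDerivAt_id b).sub_const a₀).const_mul L
      exact h1.sub h2
    exact hd.deriv
  have hψ0 : ψ b₀ = 0 := by
    have : f b₀ - f a₀ = L * (b₀ - a₀) := by
      field_simp at hmv; linarith [hmv]
    simp [hψdef, this]
  have hψd0 : deriv ψ b₀ = 0 := by rw [hψderiv]; simp [h1b]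
  have hψ2 : iteratedDeriv 2 ψ b₀ = iteratedDeriv 2 f b₀ := by
    rw [iteratedDeriv_succ, iteratedDeriv_one, hψderiv, deriv_sub_const, h2eq]
  obtain ⟨δ', hδ', Hb⟩ := aux_sign ψ hψC2 b₀ hψd0 (by rw [hψ2]; exact h2b)
  rw [hψ2] at Hb
  set δ := min δ' (b₀ - a₀) with hδdef
  have hδ : 0 < δ := lt_min hδ' hba₀
  have key : ∀ b c : ℝ, |b - b₀| < δ → |c - c₀| < ε →
      (f b - f a₀) / (b - a₀) = deriv f c → b = b₀ ∧ c = c₀ := by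
    intro b c hbδ hcε heq
    have hba : 0 < b - a₀ := by
      have := abs_sub_lt_iff.mp (lt_of_lt_of_le hbδ (min_le_right _ _))
      linarith [this.1, this.2]
    by_cases hb : b = b₀
    · refine ⟨hb, ?_⟩
      subst hb
      rw [hmv] at heq
      by_contra hcne
      have := Hc c hcε hcne
      rw [← heq] at this
      simp at this
    · exfalso
      have hψpos := Hb b (lt_of_lt_of_le hbδ (min_le_left _ _)) hb
      rw [hψ0, sub_zero] at hψpos
      set u := deriv f c - L with hu
      have hueq : u = ψ b / (b - a₀) := by
        rw [hu, ← heq, hψdef]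
        field_simp
      have hu2 : 0 < u * iteratedDeriv 2 f b₀ := by
        rw [hueq, div_mul_eq_mul_div]
        exact div_pos hψpos hba
      by_cases hcc : c = c₀
      · rw [hcc] at hu; simp [hu, ← hL] at hu2
      · have hu3 : 0 < u * iteratedDeriv 3 f c₀ := Hc c hcε hcc
        nlinarith [mul_pos hu2 hu3, sq_nonneg u, mul_nonneg (mul_self_nonneg u) (neg_pos.mpr hsign).le]
  refine ⟨⟨δ, hδ, ε, hε, key⟩, ?_⟩
  rintro ⟨δ₂, hδ₂, C, hCcont, hC0, hCeq⟩
  have hmem : b₀ ∈ Ioo (b₀ - δ₂) (b₀ + δ₂) := ⟨by linarith, by linarith⟩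
  have hCat : ContinuousAt C b₀ := hCcont.continuousAt (isOpen_Ioo.mem_nhds hmem)
  obtain ⟨δ₃, hδ₃, hδ₃H⟩ := Metric.continuousAt_iff.mp hCat ε hε
  set r := min δ₃ (min δ δ₂) with hr
  have hrpos : 0 < r := lt_min hδ₃ (lt_min hδ hδ₂)
  set b := b₀ + r / 2 with hb
  have hbb : |b - b₀| = r / 2 := by
    rw [hb]; simp [abs_of_pos]; linarith
  have h1 : |b - b₀| < δ₂ := by rw [hbb]; have := min_le_right δ₃ (min δ δ₂); have := min_le_right δ (δ₂); nlinarith [min_le_right δ₃ (min δ δ₂), min_le_right δ δ₂]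
  have h2 : |b - b₀| < δ := by rw [hbb]; nlinarith [min_le_right δ₃ (min δ δ₂), min_le_left δ δ₂]
  have h3 : |b - b₀| < δ₃ := by rw [hbb]; nlinarith [min_le_left δ₃ (min δ δ₂)]
  have hC : |C b - c₀| < ε := by
    have := hδ₃H (by rwa [Real.dist_eq]); rwa [Real.dist_eq, hC0] at this
  have := (key b (C b) h2 hC (hCeq b h1)).1
  rw [hb] at this
  linarith
end

section
/- Let f : ℝ → ℝ be four-times continuously differentiable, fix [a₀, b₀] with a₀ < b₀, and let c₀ ∈ (a₀, b₀) be a mean value abscissa for f on [a₀, b₀]. Suppose f''(c₀) = 0, f'(b₀) = f'(c₀), f''(b₀) ≠ 0, f'''(c₀) ≠ 0, and that f''(b₀) and f'''(c₀) have the same sign (i.e. f''(b₀)·f'''(c₀) > 0). Then there exist δ > 0, ε > 0 and two continuously differentiable functions C₁, C₂ : (b₀ - δ, b₀ + δ) → ℝ with C₁(b₀) = C₂(b₀) = c₀, satisfying (f(b) - f(a₀))/(b - a₀) = f'(Cᵢ(b)) for all |b - b₀| < δ and i = 1, 2, with C₁(b) ≠ C₂(b) for b ≠ b₀, and such that every pair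 (b, c) with |b - b₀| < δ, |c - c₀| < ε, and (f(b) - f(a₀))/(b - a₀) = f'(c) satisfies c = C₁(b) or c = C₂(b). -/
open intervalIntegral MeasureTheory Filter


lemma exists_taylor_rem (g : ℝ → ℝ) (hg : ContDiff ℝ 3 g) (x₀ : ℝ) :
    ∃ T : ℝ → ℝ, ContDiff ℝ 1 T ∧ T x₀ = deriv (deriv g) x₀ / 2 ∧
      ∀ x, g x = g x₀ + deriv g x₀ * (x - x₀) + (x - x₀) ^ 2 * T x := by
  have hg1 : Differentiable ℝ g := hg.differentiable (by norm_num)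
  have hgd : ContDiff ℝ 2 (deriv g) := by
    rw [show (3 : WithTop ℕ∞) = 2 + 1 by norm_num, contDiff_succ_iff_deriv] at hg
    exact hg.2.2
  have hg2 : Differentiable ℝ (deriv g) := hgd.differentiable (by norm_num)
  have hgdd : ContDiff ℝ 1 (deriv (deriv g)) := by
    rw [show (2 : WithTop ℕ∞) = 1 + 1 by norm_num, contDiff_succ_iff_deriv] at hgd
    exact hgd.2.2
  have hg3 : Differentiable ℝ (deriv (deriv g)) := hgdd.differentiable one_ne_zero
  have hg3c : Continuous (deriv (deriv g)) := hgdd.continuous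
  have hg4c : Continuous (deriv (deriv (deriv g))) := (contDiff_one_iff_deriv.mp hgdd).2
  refine ⟨fun x => ∫ t in (0:ℝ)..1, (1 - t) * deriv (deriv g) (x₀ + t * (x - x₀)), ?_, ?_, ?_⟩
  · -- C¹
    set D := deriv (deriv g)
    set D' := deriv (deriv (deriv g)) with hD'
    have key : ∀ x : ℝ, HasDerivAt (fun x => ∫ t in (0:ℝ)..1, (1 - t) * D (x₀ + t * (x - x₀)))
        (∫ t in (0:ℝ)..1, (1 - t) * (D' (x₀ + t * (x - x₀)) * t)) x := by
      intro x
      set K : Set ℝ :=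
        (fun p : ℝ × ℝ => x₀ + p.1 * (p.2 - x₀)) '' (Set.Icc 0 1 ×ˢ Metric.closedBall x 1)
      have hKc : IsCompact K :=
        ((isCompact_Icc).prod (isCompact_closedBall x 1)).image (by fun_prop)
      obtain ⟨M, hM⟩ := hKc.exists_bound_of_continuousOn (hg4c.continuousOn)
      have hbd : ∀ t ∈ Set.uIoc (0:ℝ) 1, ∀ y ∈ Metric.ball x 1,
          ‖(1 - t) * (D' (x₀ + t * (y - x₀)) * t)‖ ≤ |M| + 1 := by
        intro t ht y hy
        rw [Set.uIoc_of_le (by norm_num)] at ht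
        have hmem : x₀ + t * (y - x₀) ∈ K :=
          ⟨(t, y), ⟨⟨ht.1.le, ht.2⟩, Metric.ball_subset_closedBall hy⟩, rfl⟩
        have h1 : ‖D' (x₀ + t * (y - x₀))‖ ≤ |M| := le_trans (hM _ hmem) (le_abs_self M)
        have h2 : |1 - t| ≤ 1 := by rw [abs_le]; constructor <;> nlinarith [ht.1, ht.2]
        have h3 : |t| ≤ 1 := by rw [abs_le]; constructor <;> nlinarith [ht.1, ht.2]
        calc ‖(1 - t) * (D' (x₀ + t * (y - x₀)) * t)‖
            = |1 - t| * (‖D' (x₀ + t * (y - x₀))‖ * |t|) := by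
              simp [abs_mul, Real.norm_eq_abs]
          _ ≤ 1 * ((|M|+1) * 1) := by
              apply mul_le_mul h2 _ (by positivity) zero_le_one
              apply mul_le_mul (by linarith) h3 (abs_nonneg _) (by positivity)
          _ = |M| + 1 := by ring
      have := intervalIntegral.hasDerivAt_integral_of_dominated_loc_of_deriv_le
        (F := fun y t => (1 - t) * D (x₀ + t * (y - x₀)))
        (F' := fun y t => (1 - t) * (D' (x₀ + t * (y - x₀)) * t))
        (x₀ := x) (a := 0) (b := 1) (μ := volume) (bound := fun _ => |M| + 1)
        (Metric.ball_mem_nhds x one_pos)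
        (Filter.Eventually.of_forall fun y =>
          (Continuous.aestronglyMeasurable (by fun_prop)))
        ((Continuous.intervalIntegrable (by fun_prop) 0 1))
        (Continuous.aestronglyMeasurable (by fun_prop))
        (ae_of_all _ fun t ht y hy => hbd t ht y hy)
        (intervalIntegrable_const)
        (ae_of_all _ fun t ht y hy => ?_)
      · exact this.2
      · have hin : HasDerivAt (fun y : ℝ => x₀ + t * (y - x₀)) t y := by
          simpa using (((hasDerivAt_id y).sub_const x₀).const_mul t).const_add x₀
        exact ((hg3 _).hasDerivAt.comp y hin).const_mul (1 - t)
    rw [contDiff_one_iff_deriv]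
    constructor
    · exact fun x => (key x).differentiableAt
    · have hderiv : deriv (fun x => ∫ t in (0:ℝ)..1, (1 - t) * D (x₀ + t * (x - x₀)))
          = fun x => ∫ t in (0:ℝ)..1, (1 - t) * (D' (x₀ + t * (x - x₀)) * t) := by
        funext x; exact (key x).deriv
      rw [hderiv]
      apply intervalIntegral.continuous_parametric_intervalIntegral_of_continuous'
        (f := fun x t => (1 - t) * (D' (x₀ + t * (x - x₀)) * t))
      fun_prop
  · -- value at x₀
    simp only [sub_self, mul_zero, add_zero]
    rw [intervalIntegral.integral_mul_const]
    have h12 : (∫ t in (0:ℝ)..1, (1 - t)) = 1/2 := by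
      have h := intervalIntegral.integral_sub
        (_root_.intervalIntegrable_const (c := (1:ℝ)) (a := (0:ℝ)) (b := 1) (μ := volume))
        (intervalIntegral.intervalIntegrable_id (a := (0:ℝ)) (b := 1) (μ := volume))
      rw [h]
      simp [integral_id]
      norm_num
    rw [h12]; ring
  · -- identity
    intro x
    set u := x - x₀ with hu
    have hΦ : ∀ t : ℝ, HasDerivAt (fun t => g (x₀ + t * u) + (1 - t) * u * deriv g (x₀ + t * u))
        ((1 - t) * u ^ 2 * deriv (deriv g) (x₀ + t * u)) t := by
      intro t
      have hin : HasDerivAt (fun t : ℝ => x₀ + t * u) u t := by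
        simpa using ((hasDerivAt_id t).mul_const u).const_add x₀
      have h1 : HasDerivAt (fun t => g (x₀ + t * u)) (deriv g (x₀ + t * u) * u) t :=
        ((hg1 _).hasDerivAt).comp t hin
      have h2 : HasDerivAt (fun t => deriv g (x₀ + t * u)) (deriv (deriv g) (x₀ + t * u) * u) t :=
        ((hg2 _).hasDerivAt).comp t hin
      have h3 : HasDerivAt (fun t : ℝ => (1 - t) * u) (-u) t := by
        simpa using ((hasDerivAt_id t).const_sub 1).mul_const u
      have := h1.add (h3.mul h2)
      exact this.congr_deriv (by ring)
    have hcont : Continuous fun t : ℝ => (1 - t) * u ^ 2 * deriv (deriv g) (x₀ + t * u) := by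
      fun_prop
    have hint := intervalIntegral.integral_eq_sub_of_hasDerivAt (fun t _ => hΦ t)
      (hcont.intervalIntegrable 0 1)
    have hpull : (∫ t in (0:ℝ)..1, (1 - t) * u ^ 2 * deriv (deriv g) (x₀ + t * u))
        = u ^ 2 * ∫ t in (0:ℝ)..1, (1 - t) * deriv (deriv g) (x₀ + t * u) := by
      rw [← intervalIntegral.integral_const_mul]
      congr 1
      funext t
      ring
    rw [hpull] at hint
    simp only [one_mul, sub_self, zero_mul, mul_zero, add_zero, zero_add, sub_zero,
      one_smul] at hint
    have hx : x₀ + u = x := by rw [hu]; ring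
    rw [hx] at hint
    linarith [hint]

theorem aux_pos_s9
    (f : ℝ → ℝ) (hf : ContDiff ℝ 4 f)
    (a₀ b₀ c₀ : ℝ) (hab : a₀ < b₀) (hc : c₀ ∈ Set.Ioo a₀ b₀)
    (hmv : (f b₀ - f a₀) / (b₀ - a₀) = deriv f c₀)
    (h2c : iteratedDeriv 2 f c₀ = 0)
    (h1b : deriv f b₀ = deriv f c₀)
    (h2pos : 0 < iteratedDeriv 2 f b₀)
    (h3pos : 0 < iteratedDeriv 3 f c₀) :
    ∃ δ > 0, ∃ ε > 0, ∃ C₁ C₂ : ℝ → ℝ,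
      C₁ b₀ = c₀ ∧ C₂ b₀ = c₀ ∧
      ContDiffOn ℝ 1 C₁ (Set.Ioo (b₀ - δ) (b₀ + δ)) ∧
      ContDiffOn ℝ 1 C₂ (Set.Ioo (b₀ - δ) (b₀ + δ)) ∧
      (∀ b : ℝ, |b - b₀| < δ → (f b - f a₀) / (b - a₀) = deriv f (C₁ b)) ∧
      (∀ b : ℝ, |b - b₀| < δ → (f b - f a₀) / (b - a₀) = deriv f (C₂ b)) ∧
      (∀ b : ℝ, |b - b₀| < δ → b ≠ b₀ → C₁ b ≠ C₂ b) ∧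
      (∀ b c : ℝ, |b - b₀| < δ → |c - c₀| < ε →
        (f b - f a₀) / (b - a₀) = deriv f c → c = C₁ b ∨ c = C₂ b) := by
  have i2 : iteratedDeriv 2 f = deriv (deriv f) := by
    rw [show (2:ℕ) = 1 + 1 from rfl, iteratedDeriv_succ, iteratedDeriv_one]
  have i3 : iteratedDeriv 3 f = deriv (deriv (deriv f)) := by
    rw [show (3:ℕ) = 2 + 1 from rfl, iteratedDeriv_succ, i2]
  have hdf : ContDiff ℝ 3 (deriv f) := by
    have := hf
    rw [show (4 : WithTop ℕ∞) = 3 + 1 by norm_num, contDiff_succ_iff_deriv] at this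
    exact this.2.2
  -- Taylor expansions
  obtain ⟨R, hRc1, hR0, hRid0⟩ := exists_taylor_rem (deriv f) hdf c₀
  obtain ⟨S, hSc1, hS0, hSid⟩ := exists_taylor_rem f (hf.of_le (by norm_num)) b₀
  have hR0pos : 0 < R c₀ := by
    rw [hR0, ← i3]; positivity
  have hS0pos : 0 < S b₀ := by
    have : deriv (deriv f) b₀ = iteratedDeriv 2 f b₀ := by rw [i2]
    rw [hS0, this]; positivity
  have hRid : ∀ c, deriv f c = deriv f c₀ + (c - c₀) ^ 2 * R c := by
    intro c
    have := hRid0 c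
    rw [← i2, h2c] at this
    linarith [this]
  have hfb0 : f b₀ - f a₀ = deriv f c₀ * (b₀ - a₀) := by
    rw [div_eq_iff (sub_ne_zero.mpr hab.ne')] at hmv
    exact hmv
  -- ψ and θ
  set ψ : ℝ → ℝ := fun c => (c - c₀) * Real.sqrt (R c) with hψdef
  set θ : ℝ → ℝ := fun b => (b - b₀) * Real.sqrt (S b / (b - a₀)) with hθdef
  have hψ0 : ψ c₀ = 0 := by simp [hψdef]
  have hθ0 : θ b₀ = 0 := by simp [hθdef]
  have hsqRcd : ContDiffAt ℝ 1 (fun c => Real.sqrt (R c)) c₀ :=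
    (Real.contDiffAt_sqrt hR0pos.ne').comp c₀ hRc1.contDiffAt
  have hψcd : ContDiffAt ℝ 1 ψ c₀ :=
    (contDiffAt_id.sub contDiffAt_const).mul hsqRcd
  have hargb : 0 < S b₀ / (b₀ - a₀) := div_pos hS0pos (sub_pos.mpr hab)
  have hθcd : ContDiffAt ℝ 1 θ b₀ := by
    refine (contDiffAt_id.sub contDiffAt_const).mul ?_
    exact (Real.contDiffAt_sqrt hargb.ne').comp b₀
      (hSc1.contDiffAt.div (contDiffAt_id.sub contDiffAt_const) (sub_ne_zero.mpr hab.ne'))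
  -- derivative of ψ at c₀
  set m : ℝ := Real.sqrt (R c₀) with hmdef
  have hmpos : 0 < m := Real.sqrt_pos.mpr hR0pos
  have hψd : HasDerivAt ψ m c₀ := by
    have hsq : HasDerivAt (fun c => Real.sqrt (R c))
        (deriv (fun c => Real.sqrt (R c)) c₀) c₀ :=
      (hsqRcd.differentiableAt one_ne_zero).hasDerivAt
    have := ((hasDerivAt_id c₀).sub_const c₀).mul hsq
    exact this.congr_deriv (by simp [hmdef])
  set e : ℝ ≃L[ℝ] ℝ := ContinuousLinearEquiv.unitsEquivAut ℝ (Units.mk0 m hmpos.ne') with hedef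
  have hfd : HasFDerivAt ψ (e : ℝ →L[ℝ] ℝ) c₀ := hψd.hasFDerivAt
  have hstrict : HasStrictFDerivAt ψ (e : ℝ →L[ℝ] ℝ) c₀ := hψcd.hasStrictFDerivAt' hfd one_ne_zero
  set Φ : ℝ → ℝ := hstrict.localInverse ψ e c₀ with hΦdef
  have hΦψc₀ : Φ (ψ c₀) = c₀ := hstrict.localInverse_apply_image
  have hΦ0 : Φ 0 = c₀ := by rwa [hψ0] at hΦψc₀
  have hΦcd : ContDiffAt ℝ 1 Φ 0 := by
    have : ContDiffAt ℝ 1 (hψcd.localInverse hfd one_ne_zero) (ψ c₀) :=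
      hψcd.to_localInverse hfd one_ne_zero
    rwa [hψ0] at this
  have hleft : ∀ᶠ c in nhds c₀, Φ (ψ c) = c := hstrict.eventually_left_inverse
  have hright : ∀ᶠ y in nhds (0:ℝ), ψ (Φ y) = y := by
    have := hstrict.eventually_right_inverse
    rwa [hψ0] at this
  -- branches
  set C₁ : ℝ → ℝ := fun b => Φ (θ b) with hC₁def
  set C₂ : ℝ → ℝ := fun b => Φ (-θ b) with hC₂def
  have hC₁b₀ : C₁ b₀ = c₀ := by rw [hC₁def]; simp only [hθ0]; exact hΦ0
  have hC₂b₀ : C₂ b₀ = c₀ := by rw [hC₂def]; simp only [hθ0, neg_zero]; exact hΦ0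
  have hΦθ0 : ContDiffAt ℝ 1 Φ (θ b₀) := by rwa [hθ0]
  have hC₁cd : ContDiffAt ℝ 1 C₁ b₀ := ContDiffAt.comp b₀ hΦθ0 hθcd
  have hC₂cd : ContDiffAt ℝ 1 C₂ b₀ := by
    refine ContDiffAt.comp b₀ ?_ hθcd.neg
    rwa [hθ0, neg_zero]
  -- key equivalence
  have key : ∀ b c : ℝ, a₀ < b → 0 ≤ S b → 0 ≤ R c →
      ((f b - f a₀) / (b - a₀) = deriv f c ↔ (ψ c = θ b ∨ ψ c = -θ b)) := by
    intro b c hb hS hR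
    have hba : (0:ℝ) < b - a₀ := sub_pos.mpr hb
    have e2 : f b - f a₀ - deriv f c * (b - a₀) =
        (b - b₀) ^ 2 * S b - (b - a₀) * ((c - c₀) ^ 2 * R c) := by
      linear_combination (hSid b) - (b - a₀) * (hRid c) + hfb0 + (b - b₀) * h1b
    have e3 : ψ c ^ 2 = (c - c₀) ^ 2 * R c := by
      simp [hψdef, mul_pow, Real.sq_sqrt hR]
    have e4 : θ b ^ 2 = (b - b₀) ^ 2 * (S b / (b - a₀)) := by
      simp [hθdef, mul_pow, Real.sq_sqrt (div_nonneg hS hba.le)]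
    rw [div_eq_iff hba.ne', ← sq_eq_sq_iff_eq_or_eq_neg, e3, e4]
    constructor
    · intro h
      have h5 : (b - b₀) ^ 2 * S b = (b - a₀) * ((c - c₀) ^ 2 * R c) := by linarith [e2]
      have h6 : (c - c₀) ^ 2 * R c = (b - b₀) ^ 2 * S b / (b - a₀) := by
        rw [eq_div_iff hba.ne']; linarith [h5]
      rw [h6, mul_div_assoc]
    · intro h
      have h5 : (c - c₀) ^ 2 * R c * (b - a₀) = (b - b₀) ^ 2 * S b := by
        rw [h]; field_simp
      linarith [e2, h5]
  -- eventual facts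
  have hRpos : ∀ᶠ c in nhds c₀, 0 < R c :=
    hRc1.continuous.continuousAt.eventually (eventually_gt_nhds hR0pos)
  obtain ⟨ε, hεpos, hεball⟩ := Metric.eventually_nhds_iff.mp (hRpos.and hleft)
  have hθt : Filter.Tendsto θ (nhds b₀) (nhds 0) := by
    rw [← hθ0]; exact hθcd.continuousAt
  have hθtneg : Filter.Tendsto (fun b => -θ b) (nhds b₀) (nhds 0) := by
    simpa using hθt.neg
  have hrt1 : ∀ᶠ b in nhds b₀, ψ (Φ (θ b)) = θ b := hθt.eventually hright
  have hrt2 : ∀ᶠ b in nhds b₀, ψ (Φ (-θ b)) = -θ b := hθtneg.eventually hright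
  have hC₁t : Filter.Tendsto C₁ (nhds b₀) (nhds c₀) := by
    rw [← hC₁b₀]; exact hC₁cd.continuousAt
  have hC₂t : Filter.Tendsto C₂ (nhds b₀) (nhds c₀) := by
    rw [← hC₂b₀]; exact hC₂cd.continuousAt
  have hRC₁ : ∀ᶠ b in nhds b₀, 0 < R (C₁ b) := hC₁t.eventually hRpos
  have hRC₂ : ∀ᶠ b in nhds b₀, 0 < R (C₂ b) := hC₂t.eventually hRpos
  have hSpos : ∀ᶠ b in nhds b₀, 0 < S b :=
    hSc1.continuous.continuousAt.eventually (eventually_gt_nhds hS0pos)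
  have hagt : ∀ᶠ b in nhds b₀, a₀ < b := eventually_gt_nhds hab
  obtain ⟨δ₂, hδ₂pos, hδ₂⟩ := Metric.eventually_nhds_iff.mp
    (hagt.and (hSpos.and (hrt1.and (hrt2.and (hRC₁.and hRC₂)))))
  obtain ⟨u₁, hu₁, hCD₁⟩ := hC₁cd.contDiffOn le_rfl (by norm_num)
  obtain ⟨u₂, hu₂, hCD₂⟩ := hC₂cd.contDiffOn le_rfl (by norm_num)
  obtain ⟨δ₃, hδ₃pos, hδ₃⟩ := Metric.mem_nhds_iff.mp hu₁
  obtain ⟨δ₄, hδ₄pos, hδ₄⟩ := Metric.mem_nhds_iff.mp hu₂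
  refine ⟨min (min δ₂ δ₃) δ₄, by positivity, ε, hεpos, C₁, C₂, hC₁b₀, hC₂b₀, ?_, ?_, ?_, ?_, ?_, ?_⟩
  · refine (hCD₁.mono ?_)
    intro b hb
    apply hδ₃
    rw [← Real.ball_eq_Ioo] at hb
    exact Metric.ball_subset_ball (le_trans (min_le_left _ _) (min_le_right _ _)) hb
  · refine (hCD₂.mono ?_)
    intro b hb
    apply hδ₄
    rw [← Real.ball_eq_Ioo] at hb
    exact Metric.ball_subset_ball (min_le_right _ _) hb
  · intro b hb
    have hbδ₂ : dist b b₀ < δ₂ := by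
      rw [Real.dist_eq]; exact lt_of_lt_of_le hb (le_trans (min_le_left _ _) (min_le_left _ _))
    obtain ⟨h1, h2, h3, h4, h5, h6⟩ := hδ₂ hbδ₂
    exact (key b (C₁ b) h1 h2.le h5.le).mpr (Or.inl h3)
  · intro b hb
    have hbδ₂ : dist b b₀ < δ₂ := by
      rw [Real.dist_eq]; exact lt_of_lt_of_le hb (le_trans (min_le_left _ _) (min_le_left _ _))
    obtain ⟨h1, h2, h3, h4, h5, h6⟩ := hδ₂ hbδ₂
    exact (key b (C₂ b) h1 h2.le h6.le).mpr (Or.inr h4)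
  · intro b hb hbne heq
    have hbδ₂ : dist b b₀ < δ₂ := by
      rw [Real.dist_eq]; exact lt_of_lt_of_le hb (le_trans (min_le_left _ _) (min_le_left _ _))
    obtain ⟨h1, h2, h3, h4, h5, h6⟩ := hδ₂ hbδ₂
    have hθne : θ b ≠ 0 := by
      rw [hθdef]
      refine mul_ne_zero (sub_ne_zero.mpr hbne) ?_
      exact (Real.sqrt_pos.mpr (div_pos h2 (sub_pos.mpr h1))).ne'
    have h3' : ψ (C₁ b) = θ b := h3
    have h4' : ψ (C₂ b) = -θ b := h4
    rw [heq] at h3'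
    rw [h3'] at h4'
    exact hθne (by linarith [h4'])
  · intro b c hb hcε heq
    have hbδ₂ : dist b b₀ < δ₂ := by
      rw [Real.dist_eq]; exact lt_of_lt_of_le hb (le_trans (min_le_left _ _) (min_le_left _ _))
    obtain ⟨h1, h2, h3, h4, h5, h6⟩ := hδ₂ hbδ₂
    have hcd : dist c c₀ < ε := by rw [Real.dist_eq]; exact hcε
    obtain ⟨hcR, hcΦ⟩ := hεball hcd
    rcases (key b c h1 h2.le hcR.le).mp heq with h | h
    · left; rw [← hcΦ, h]
    · right; rw [← hcΦ, h]

/-- Theorem (main II, same signs): if `f` is four-times continuously differentiable,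
`c₀` is a mean value abscissa for `f` on `[a₀, b₀]` with `f''(c₀) = 0`,
`f'(b₀) = f'(c₀)`, `f''(b₀) ≠ 0`, `f'''(c₀) ≠ 0`, and `f''(b₀)` and `f'''(c₀)` have
the same sign, then there are exactly two continuously differentiable local choices
`c = C₁(b)` and `c = C₂(b)` of mean value abscissa through `c₀`, and no other nearby
solutions. -/
theorem mean_value_abscissa_two_branches_of_same_signs
    (f : ℝ → ℝ) (hf : ContDiff ℝ 4 f)
    (a₀ b₀ c₀ : ℝ) (hab : a₀ < b₀) (hc : c₀ ∈ Set.Ioo a₀ b₀)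
    (hmv : (f b₀ - f a₀) / (b₀ - a₀) = deriv f c₀)
    (h2c : iteratedDeriv 2 f c₀ = 0)
    (h1b : deriv f b₀ = deriv f c₀)
    (h2b : iteratedDeriv 2 f b₀ ≠ 0)
    (h3c : iteratedDeriv 3 f c₀ ≠ 0)
    (hsign : 0 < iteratedDeriv 2 f b₀ * iteratedDeriv 3 f c₀) :
    ∃ δ > 0, ∃ ε > 0, ∃ C₁ C₂ : ℝ → ℝ,
      C₁ b₀ = c₀ ∧ C₂ b₀ = c₀ ∧
      ContDiffOn ℝ 1 C₁ (Set.Ioo (b₀ - δ) (b₀ + δ)) ∧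
      ContDiffOn ℝ 1 C₂ (Set.Ioo (b₀ - δ) (b₀ + δ)) ∧
      (∀ b : ℝ, |b - b₀| < δ → (f b - f a₀) / (b - a₀) = deriv f (C₁ b)) ∧
      (∀ b : ℝ, |b - b₀| < δ → (f b - f a₀) / (b - a₀) = deriv f (C₂ b)) ∧
      (∀ b : ℝ, |b - b₀| < δ → b ≠ b₀ → C₁ b ≠ C₂ b) ∧
      (∀ b c : ℝ, |b - b₀| < δ → |c - c₀| < ε →
        (f b - f a₀) / (b - a₀) = deriv f c → c = C₁ b ∨ c = C₂ b) := by
  rcases lt_or_gt_of_ne h3c with hneg | hpos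
  swap
  · -- positive case
    have h2pos : 0 < iteratedDeriv 2 f b₀ := by
      rcases mul_pos_iff.mp hsign with ⟨h, _⟩ | ⟨_, h⟩
      · exact h
      · linarith
    exact aux_pos_s9 f hf a₀ b₀ c₀ hab hc hmv h2c h1b h2pos hpos
  · -- negative case: apply to -f
    set g : ℝ → ℝ := fun x => -f x with hgdef
    have hgderiv : ∀ x, deriv g x = -deriv f x := fun x => deriv.neg
    have hgit : ∀ n x, iteratedDeriv n g x = -iteratedDeriv n f x := by
      intro n x
      exact iteratedDeriv_neg n f x
    have h2posg : 0 < iteratedDeriv 2 g b₀ := by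
      rw [hgit]
      rcases mul_pos_iff.mp hsign with ⟨h, h'⟩ | ⟨_, h⟩
      · linarith
      · linarith
    have h3posg : 0 < iteratedDeriv 3 g c₀ := by rw [hgit]; linarith
    have hmvg : (g b₀ - g a₀) / (b₀ - a₀) = deriv g c₀ := by
      rw [hgderiv, hgdef]
      simp only
      rw [show -f b₀ - -f a₀ = -(f b₀ - f a₀) by ring, neg_div, hmv]
    have h2cg : iteratedDeriv 2 g c₀ = 0 := by rw [hgit, h2c, neg_zero]
    have h1bg : deriv g b₀ = deriv g c₀ := by rw [hgderiv, hgderiv, h1b]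
    obtain ⟨δ, hδ, ε, hε, C₁, C₂, hb1, hb2, hcd1, hcd2, heq1, heq2, hne, hcomp⟩ :=
      aux_pos_s9 g (hf.neg) a₀ b₀ c₀ hab hc hmvg h2cg h1bg h2posg h3posg
    have hiff : ∀ b c : ℝ, ((g b - g a₀) / (b - a₀) = deriv g c) ↔
        ((f b - f a₀) / (b - a₀) = deriv f c) := by
      intro b c
      rw [hgderiv, hgdef]
      simp only
      rw [show -f b - -f a₀ = -(f b - f a₀) by ring, neg_div, neg_inj]
    exact ⟨δ, hδ, ε, hε, C₁, C₂, hb1, hb2, hcd1, hcd2,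
      fun b hb => (hiff b (C₁ b)).mp (heq1 b hb),
      fun b hb => (hiff b (C₂ b)).mp (heq2 b hb), hne,
      fun b c hb hc' heq => hcomp b c hb hc' ((hiff b c).mpr heq)⟩
end

section
/- Let f be a non-constant real analytic function on an open interval containing [a₀, b₀], with a₀ < b₀ and f(a₀) = f(b₀) = 0. Then there exists a mean value abscissa c₀ ∈ (a₀, b₀) for f on [a₀, b₀] such that f'(c₀) = 0 and the smallest integer k ≥ 1 with f^{(k)}(c₀) ≠ 0 is even (equivalently, the order of vanishing of f' at c₀ is odd). -/
open Set Filter Function Topology Nat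

/-- Lemma: if `f` is a non-constant real analytic function on an open interval
containing `[a₀, b₀]` with `f(a₀) = f(b₀) = 0`, then there is a mean value abscissa
`c₀ ∈ (a₀, b₀)` for `f` on `[a₀, b₀]` with `f'(c₀) = 0` such that the smallest `k ≥ 1`
with `f^(k)(c₀) ≠ 0` is even (i.e. the order of vanishing of `f'` at `c₀` is odd). -/
theorem exists_abscissa_even_vanishing_order
    (f : ℝ → ℝ) (a₀ b₀ A B : ℝ)
    (hab : a₀ < b₀) (hA : A < a₀) (hB : b₀ < B)
    (hf : ∀ x ∈ Set.Ioo A B, AnalyticAt ℝ f x)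
    (hnc : ∃ x ∈ Set.Ioo A B, ∃ y ∈ Set.Ioo A B, f x ≠ f y)
    (ha : f a₀ = 0) (hb : f b₀ = 0) :
    ∃ c₀ ∈ Set.Ioo a₀ b₀,
      (f b₀ - f a₀) / (b₀ - a₀) = deriv f c₀ ∧
      deriv f c₀ = 0 ∧
      ∃ k : ℕ, 1 ≤ k ∧ Even k ∧
        iteratedDeriv k f c₀ ≠ 0 ∧
        ∀ j : ℕ, 1 ≤ j → j < k → iteratedDeriv j f c₀ = 0 := by
  have hsub : Set.Icc a₀ b₀ ⊆ Set.Ioo A B := fun x hx => ⟨hA.trans_le hx.1, hx.2.trans_lt hB⟩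
  -- f is not locally constant anywhere in (A, B)
  have key : ∀ c ∈ Set.Ioo A B, ¬ (∀ᶠ z in 𝓝 c, f z = f c) := by
    intro c hc hev
    have heq : Set.EqOn f (fun _ => f c) (Set.Ioo A B) :=
      AnalyticOnNhd.eqOn_of_preconnected_of_eventuallyEq hf analyticOnNhd_const
        isPreconnected_Ioo hc hev
    obtain ⟨x, hx, y, hy, hxy⟩ := hnc
    exact hxy ((heq hx).trans (heq hy).symm)
  -- a point with f ≠ 0 inside (a₀, b₀)
  obtain ⟨x₀, hx₀mem, hx₀⟩ : ∃ x ∈ Set.Ioo a₀ b₀, f x ≠ 0 := by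
    by_contra h
    push_neg at h
    set m := (a₀ + b₀) / 2 with hm_def
    have hm : m ∈ Set.Ioo a₀ b₀ := ⟨by rw [hm_def]; linarith, by rw [hm_def]; linarith⟩
    apply key m (hsub (Set.mem_Icc_of_Ioo hm))
    filter_upwards [isOpen_Ioo.mem_nhds hm] with z hz
    rw [h z hz, h m hm]
  -- maximum of |f| on [a₀, b₀]
  have hcontf : ContinuousOn f (Set.Icc a₀ b₀) := fun x hx =>
    ((hf x (hsub hx)).continuousAt).continuousWithinAt
  obtain ⟨c, hcmem, hmax⟩ := isCompact_Icc.exists_isMaxOn (α := ℝ)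
    ⟨a₀, Set.left_mem_Icc.mpr hab.le⟩ hcontf.abs
  have hfc_ne : f c ≠ 0 := by
    intro h0
    have h1 : |f x₀| ≤ |f c| := hmax (Set.mem_Icc_of_Ioo hx₀mem)
    rw [h0] at h1
    simp only [abs_zero] at h1
    exact hx₀ (abs_eq_zero.mp (le_antisymm h1 (abs_nonneg _)))
  have hca : c ≠ a₀ := fun h => hfc_ne (h ▸ ha)
  have hcb : c ≠ b₀ := fun h => hfc_ne (h ▸ hb)
  have hcIoo : c ∈ Set.Ioo a₀ b₀ :=
    ⟨lt_of_le_of_ne hcmem.1 (Ne.symm hca), lt_of_le_of_ne hcmem.2 hcb⟩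
  have hcAB : c ∈ Set.Ioo A B := hsub hcmem
  have hnhds : Set.Ioo a₀ b₀ ∈ 𝓝 c := isOpen_Ioo.mem_nhds hcIoo
  -- c is a local extremum of f
  have hext : (∀ᶠ z in 𝓝 c, f z - f c ≤ 0) ∨ (∀ᶠ z in 𝓝 c, 0 ≤ f z - f c) := by
    rcases hfc_ne.lt_or_gt with hneg | hpos
    · right
      filter_upwards [hnhds] with z hz
      have h1 : |f z| ≤ |f c| := hmax (Set.mem_Icc_of_Ioo hz)
      have h2 : |f c| = -(f c) := abs_of_neg hneg
      have h3 := neg_abs_le (f z)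
      linarith
    · left
      filter_upwards [hnhds] with z hz
      have h1 : |f z| ≤ |f c| := hmax (Set.mem_Icc_of_Ioo hz)
      have h2 : |f c| = f c := abs_of_pos hpos
      have h3 := le_abs_self (f z)
      linarith
  -- power series of g = f - f c at c
  set g : ℝ → ℝ := fun x => f x - f c with hg_def
  have hgan : AnalyticAt ℝ g c := (hf c hcAB).sub analyticAt_const
  obtain ⟨q, hq⟩ := hgan
  have hq_ne : q ≠ 0 := by
    intro h0
    apply key c hcAB
    filter_upwards [hq.locally_zero_iff.mpr h0] with z hz
    have : f z - f c = 0 := hz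
    linarith
  set n := q.order with hn_def
  have hcoeff0 : q.coeff 0 = 0 := by
    have h1 : q 0 1 = g c := hq.coeff_zero 1
    have h2 : g c = 0 := by simp [hg_def]
    rw [FormalMultilinearSeries.coeff, h1, h2]
  have hn1 : 1 ≤ n := by
    by_contra h
    have h0 : n = 0 := by omega
    have h1 := q.apply_order_ne_zero hq_ne
    rw [← hn_def, h0] at h1
    exact h1 (FormalMultilinearSeries.coeff_eq_zero.mp hcoeff0)
  have hq' := hq
  obtain ⟨r, hr⟩ := hq
  have hderiv_eq : ∀ j, iteratedDeriv j g c = j.factorial • q.coeff j := by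
    intro j
    have h1 := hr.factorial_smul (1 : ℝ) j
    rw [iteratedDeriv_eq_iteratedFDeriv]
    exact h1.symm
  have hgf : ∀ j, 1 ≤ j → iteratedDeriv j f c = iteratedDeriv j g c := by
    intro j hj
    obtain ⟨m, rfl⟩ : ∃ m, j = m + 1 := ⟨j - 1, by omega⟩
    rw [iteratedDeriv_succ', iteratedDeriv_succ']
    congr 1
    funext x
    rw [hg_def]
    exact (deriv_sub_const (f c)).symm
  have hcoeff_small : ∀ j, 1 ≤ j → j < n → iteratedDeriv j f c = 0 := by
    intro j hj hjn
    rw [hgf j hj, hderiv_eq j]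
    have h1 : q j = 0 := q.apply_eq_zero_of_lt_order hjn
    simp [FormalMultilinearSeries.coeff, h1]
  have hcoeffn : iteratedDeriv n f c ≠ 0 := by
    rw [hgf n hn1, hderiv_eq n]
    have h1 : q n ≠ 0 := q.apply_order_ne_zero hq_ne
    have h2 : q.coeff n ≠ 0 := fun h => h1 (FormalMultilinearSeries.coeff_eq_zero.mp h)
    simp [nsmul_eq_mul, Nat.factorial_ne_zero, h2]
  -- the order n is even
  have heven : Even n := by
    by_contra hodd
    have hodd' : Odd n := Nat.not_even_iff_odd.mp hodd
    set h : ℝ → ℝ := (Function.swap dslope c)^[n] g with hh_def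
    have hfac : ∀ᶠ z in 𝓝 c, g z = (z - c) ^ n • h z := Filter.Eventually.of_forall hq'.eq_pow_order_mul_iterate_dslope
    have hhc : h c ≠ 0 := hq'.iterate_dslope_fslope_ne_zero hq_ne
    have hhcont : ContinuousAt h c :=
      (HasFPowerSeriesAt.has_fpower_series_iterate_dslope_fslope n hq').continuousAt
    have hsign : ∀ᶠ z in 𝓝 c, 0 < h z * h c :=
      (hhcont.mul continuousAt_const).eventually (eventually_gt_nhds (mul_self_pos.mpr hhc))
    obtain ⟨s, hs0, hsg⟩ : ∃ s : ℝ, 0 < s * s ∧ ∀ᶠ z in 𝓝 c, 0 ≤ s * g z := by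
      rcases hext with hcase | hcase
      · refine ⟨-1, by norm_num, ?_⟩
        filter_upwards [hcase] with z hz
        have : g z = f z - f c := rfl
        nlinarith
      · refine ⟨1, by norm_num, ?_⟩
        filter_upwards [hcase] with z hz
        have : g z = f z - f c := rfl
        nlinarith
    have hall : ∀ᶠ z in 𝓝 c, g z = (z - c) ^ n * h z ∧ 0 < h z * h c ∧ 0 ≤ s * g z := by
      filter_upwards [hfac, hsign, hsg] with z h1 h2 h3
      exact ⟨by simpa [smul_eq_mul] using h1, h2, h3⟩
    rw [Metric.eventually_nhds_iff] at hall
    obtain ⟨ε, hε, hball⟩ := hall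
    have hδ : 0 < ε / 2 := by linarith
    have hdP : dist (c + ε / 2) c < ε := by
      rw [Real.dist_eq]
      have : c + ε / 2 - c = ε / 2 := by ring
      rw [this, abs_of_pos hδ]; linarith
    have hdM : dist (c - ε / 2) c < ε := by
      rw [Real.dist_eq]
      have : c - ε / 2 - c = -(ε / 2) := by ring
      rw [this, abs_neg, abs_of_pos hδ]; linarith
    obtain ⟨eP, hu, hsu⟩ := hball hdP
    obtain ⟨eM, hv, hsv⟩ := hball hdM
    have hsubP : c + ε / 2 - c = ε / 2 := by ring
    have hsubM : c - ε / 2 - c = -(ε / 2) := by ring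
    rw [hsubP] at eP
    rw [hsubM, hodd'.neg_pow] at eM
    set t := (ε / 2) ^ n with ht_def
    have ht : 0 < t := pow_pos hδ n
    set u := h (c + ε / 2)
    set v := h (c - ε / 2)
    -- u and v have the same sign
    have huv : 0 < u * v := by
      rcases hhc.lt_or_gt with hcneg | hcpos
      · have hu' : u < 0 := by nlinarith
        have hv' : v < 0 := by nlinarith
        exact mul_pos_of_neg_of_neg hu' hv'
      · have hu' : 0 < u := by nlinarith
        have hv' : 0 < v := by nlinarith
        exact mul_pos hu' hv'
    rw [eP] at hsu
    rw [eM] at hsv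
    nlinarith [mul_nonneg hsu hsv, mul_pos hs0 (mul_pos (mul_pos ht ht) huv)]
  have hn2 : 2 ≤ n := by
    rcases heven with ⟨m, hm⟩; omega
  have hderiv1 : deriv f c = 0 := by
    have := hcoeff_small 1 le_rfl (by omega)
    rwa [iteratedDeriv_one] at this
  refine ⟨c, hcIoo, ?_, hderiv1, n, hn1, heven, hcoeffn, hcoeff_small⟩
  rw [ha, hb, hderiv1]
  simp
end
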